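/- arXiv:math/0505262 — 3 statements merged into one kernel-verified Lean document; each statement's English description precedes it below -/
import Mathlib

section
/- Let α be the all-ones composition with r ≥ 1 parts, let k ≥ r, and let D_k ∈ ℤ[t] be defined by D_r = 1 and D_j = 2·D_{j−1} − ∏_{i=r}^{j−1} (1 − it) for j > r. Then a_{n,k}^α / k^n converges to D_k(1/k) / ((k−r)! · k^r) as n → ∞, where D_k(1/k) ∈ ℚ is the evaluation of D_k at 1/k and a_{n,k}^α is the number of saturated chains in 𝔑 starting at α and ending at a composition of n with k parts. -/
/-- A composition: a finite list of positive integers. -/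
def IsComposition (P : List ℕ) : Prop := ∀ x ∈ P, 0 < x

/-- Covering relation of the poset 𝔑: prepend a part 1, append a part 1,
or increase one part by 1. -/
def coverN (P Q : List ℕ) : Prop :=
  Q = 1 :: P ∨ Q = P ++ [1] ∨ ∃ j, j < P.length ∧ Q = P.set j (P.getD j 0 + 1)

/-- `ank cover α n k` is the number of saturated chains (with respect to `cover`)
starting at `α` and ending at a composition of `n` with `k` parts. -/
noncomputable def ank (cover : List ℕ → List ℕ → Prop) (α : List ℕ) (n k : ℕ) : ℕ :=
  Nat.card {c : List (List ℕ) //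
    c.Chain' cover ∧ c.head? = some α ∧
      ∃ Q, c.getLast? = some Q ∧ Q.sum = n ∧ Q.length = k}

/-- The generating function `L_k^α(t) = Σ_n a_{n,k}^α t^n`. -/
noncomputable def Lser (cover : List ℕ → List ℕ → Prop) (α : List ℕ) (k : ℕ) :
    PowerSeries ℤ :=
  PowerSeries.mk fun n => (ank cover α n k : ℤ)


namespace S14


lemma sum_set_succ : ∀ (P : List ℕ) (j : ℕ), j < P.length →
    (P.set j (P.getD j 0 + 1)).sum = P.sum + 1
  | [], j, h => by simp at h
  | a :: l, 0, _ => by simp [Nat.add_comm, Nat.add_assoc, Nat.add_left_comm]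
  | a :: l, j+1, h => by
    simp only [List.set_cons_succ, List.sum_cons, List.getD_cons_succ]
    rw [sum_set_succ l j (by simpa using h)]
    omega

lemma cover_sum {P Q : List ℕ} (h : coverN P Q) : Q.sum = P.sum + 1 := by
  rcases h with rfl | rfl | ⟨j, hj, rfl⟩
  · simp [Nat.add_comm]
  · simp
  · exact sum_set_succ P j hj

lemma cover_len {P Q : List ℕ} (h : coverN P Q) :
    Q.length = P.length + 1 ∨ Q.length = P.length := by
  rcases h with rfl | rfl | ⟨j, hj, rfl⟩ <;> simp

lemma cover_pos {P Q : List ℕ} (h : coverN P Q) (hP : ∀ x ∈ P, 0 < x) :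
    ∀ x ∈ Q, 0 < x := by
  rcases h with rfl | rfl | ⟨j, hj, rfl⟩
  · intro x hx; rcases List.mem_cons.1 hx with rfl | hx; · norm_num
    · exact hP x hx
  · intro x hx; rcases List.mem_append.1 hx with hx | hx; · exact hP x hx
    · simp only [List.mem_singleton] at hx; omega
  · intro x hx
    rcases List.mem_or_eq_of_mem_set hx with hx | rfl
    · exact hP x hx
    · omega

lemma length_le_sum : ∀ (P : List ℕ), (∀ x ∈ P, 0 < x) → P.length ≤ P.sum
  | [], _ => le_refl _
  | a :: l, h => by
    simp only [List.length_cons, List.sum_cons]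
    have := length_le_sum l (fun x hx => h x (List.mem_cons_of_mem _ hx))
    have := h a List.mem_cons_self
    omega

def CF (r : ℕ) (c : List (List ℕ)) : Prop :=
  c.Chain' coverN ∧ c.head? = some (List.replicate r 1)

lemma CF_ne_nil {r c} (h : CF r c) : c ≠ [] := by
  rintro rfl; simp [CF] at h

lemma CF_dropLast {r : ℕ} {c : List (List ℕ)} (h : CF r c) (h2 : c.dropLast ≠ []) :
    CF r c.dropLast ∧ ∀ P ∈ c.dropLast.getLast?, ∀ Q ∈ c.getLast?, coverN P Q := by
  obtain ⟨hch, hhd⟩ := h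
  have hne := CF_ne_nil ⟨hch, hhd⟩
  have hc : c.dropLast ++ [c.getLast hne] = c := List.dropLast_append_getLast hne
  rw [← hc] at hch
  unfold List.Chain' at hch
  rw [List.isChain_append] at hch
  obtain ⟨h1, _, h3⟩ := hch
  refine ⟨⟨h1, ?_⟩, ?_⟩
  · rw [← hc, List.head?_append_of_ne_nil _ h2] at hhd; exact hhd
  · intro P hP Q hQ
    have : c.getLast? = some (c.getLast hne) := List.getLast?_eq_getLast hne
    rw [this] at hQ
    simp only [Option.mem_def, Option.some.injEq] at hQ
    subst hQ
    exact h3 P hP _ (by simp)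

lemma lastFacts {r : ℕ} : ∀ (c : List (List ℕ)), CF r c → ∀ Q ∈ c.getLast?,
    (∀ x ∈ Q, 0 < x) ∧ r ≤ Q.length ∧ Q.sum + 1 = r + c.length := by
  intro c
  induction c using List.reverseRecOn with
  | nil => intro h; exact absurd rfl (CF_ne_nil h)
  | append_singleton l Q ih =>
    intro hcf R hR
    rw [List.getLast?_concat] at hR
    simp only [Option.mem_def, Option.some.injEq] at hR; subst hR
    rcases eq_or_ne l [] with rfl | hl
    · obtain ⟨_, hhd⟩ := hcf
      simp only [List.nil_append, List.head?_cons, Option.some.injEq] at hhd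
      subst hhd
      refine ⟨?_, ?_, ?_⟩
      · intro x hx; rw [List.eq_of_mem_replicate hx]; norm_num
      · simp
      · simp
    · have hdl : (l ++ [Q]).dropLast = l := by simp
      have := CF_dropLast hcf (by rw [hdl]; exact hl)
      rw [hdl] at this
      obtain ⟨hcfl, hcov⟩ := this
      obtain ⟨P, hP⟩ := List.getLast?_isSome.2 hl |> Option.isSome_iff_exists.1
      have hfacts := ih hcfl P hP
      have hcPQ : coverN P Q := by
        refine hcov P hP Q ?_
        rw [List.getLast?_concat]; rfl
      obtain ⟨hpos, hlen, hsum⟩ := hfacts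
      have hQs := cover_sum hcPQ
      have hQl := cover_len hcPQ
      refine ⟨cover_pos hcPQ hpos, by omega, by simp; omega⟩

lemma finite_lists {β : Type*} {S : Set β} (hS : S.Finite) (N : ℕ) :
    {l : List β | l.length ≤ N ∧ ∀ x ∈ l, x ∈ S}.Finite := by
  haveI := hS.to_subtype
  apply Set.Finite.subset ((List.finite_length_le S N).image (List.map Subtype.val))
  rintro l ⟨hlen, hmem⟩
  refine ⟨l.pmap (fun x h => (⟨x, h⟩ : S)) hmem, ?_, ?_⟩
  · simpa using hlen
  · simp [List.map_pmap]

lemma memFacts {r : ℕ} : ∀ (c : List (List ℕ)), CF r c → ∀ P ∈ c,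
    P.length ≤ r + c.length ∧ ∀ x ∈ P, x ≤ r + c.length := by
  intro c
  induction c using List.reverseRecOn with
  | nil => intro h; exact absurd rfl (CF_ne_nil h)
  | append_singleton l Q ih =>
    intro hcf P hP
    have hQfacts := lastFacts (l ++ [Q]) hcf Q (by rw [List.getLast?_concat]; rfl)
    obtain ⟨hpos, _, hsum⟩ := hQfacts
    rcases List.mem_append.1 hP with hP | hP
    · have hl : l ≠ [] := List.ne_nil_of_mem hP
      have hdl : (l ++ [Q]).dropLast = l := by simp
      have hcfl := (CF_dropLast hcf (by rw [hdl]; exact hl)).1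
      rw [hdl] at hcfl
      have := ih hcfl P hP
      constructor
      · calc P.length ≤ r + l.length := this.1
          _ ≤ r + (l ++ [Q]).length := by simp
      · intro x hx
        calc x ≤ r + l.length := this.2 x hx
          _ ≤ r + (l ++ [Q]).length := by simp
    · simp only [List.mem_singleton] at hP; subst hP
      have hle := length_le_sum P hpos
      constructor
      · omega
      · intro x hx
        have : x ≤ P.sum := List.le_sum_of_mem hx
        omega

lemma finite_CF_le (r L : ℕ) : {c : List (List ℕ) | CF r c ∧ c.length ≤ L}.Finite := by
  have h1 : {l : List ℕ | l.length ≤ r + L ∧ ∀ x ∈ l, x ∈ Set.Iic (r + L)}.Finite :=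
    finite_lists (Set.finite_Iic _) _
  apply Set.Finite.subset (finite_lists h1 L)
  rintro c ⟨hcf, hlen⟩
  refine ⟨hlen, fun P hP => ?_⟩
  obtain ⟨h1', h2'⟩ := memFacts c hcf P hP
  exact ⟨by omega, fun x hx => by have := h2' x hx; simp [Set.mem_Iic]; omega⟩

/-- The last element of a list of lists (default `[]`). -/
def lst (c : List (List ℕ)) : List ℕ := c.getLast?.getD []

def Tpred (r n k : ℕ) (c : List (List ℕ)) : Prop :=
  c.Chain' coverN ∧ c.head? = some (List.replicate r 1) ∧
    ∃ Q, c.getLast? = some Q ∧ Q.sum = n ∧ Q.length = k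

abbrev T (r n k : ℕ) := {c : List (List ℕ) // Tpred r n k c}

lemma Tpred.cf {r n k c} (h : Tpred r n k c) : CF r c := ⟨h.1, h.2.1⟩

lemma Tpred.ne_nil {r n k c} (h : Tpred r n k c) : c ≠ [] := CF_ne_nil h.cf

lemma Tpred.getLast? {r n k c} (h : Tpred r n k c) : c.getLast? = some (lst c) := by
  obtain ⟨Q, hQ, _, _⟩ := h.2.2
  simp [lst, hQ]

lemma Tpred.lst_sum {r n k c} (h : Tpred r n k c) : (lst c).sum = n := by
  obtain ⟨Q, hQ, hs, hl⟩ := h.2.2; simp [lst, hQ, hs]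

lemma Tpred.lst_length {r n k c} (h : Tpred r n k c) : (lst c).length = k := by
  obtain ⟨Q, hQ, hs, hl⟩ := h.2.2; simp [lst, hQ, hl]

lemma Tpred.lst_pos {r n k c} (h : Tpred r n k c) : ∀ x ∈ lst c, 0 < x :=
  (lastFacts c h.cf (lst c) h.getLast?).1

lemma Tpred.length_eq {r n k c} (h : Tpred r n k c) : n + 1 = r + c.length :=
  by have := (lastFacts c h.cf (lst c) h.getLast?).2.2; rw [h.lst_sum] at this; exact this

lemma finite_T (r n k : ℕ) : Finite (T r n k) := by
  have hfin : {c : List (List ℕ) | Tpred r n k c}.Finite := by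
    apply Set.Finite.subset (finite_CF_le r (n + 1))
    intro c hc
    exact ⟨hc.cf, by have := hc.length_eq; omega⟩
  exact hfin.to_subtype

lemma card_T_of_nlt {r n k : ℕ} (h : n < r) : Nat.card (T r n k) = 0 := by
  haveI : IsEmpty (T r n k) := ⟨fun c => by
    have h1 := c.2.length_eq
    have h2 := c.2.ne_nil
    have h3 : c.1.length ≠ 0 := fun h0 => h2 (List.length_eq_zero_iff.1 h0)
    omega⟩
  exact Nat.card_of_isEmpty

lemma card_T_of_klt {r n k : ℕ} (h : k < r) : Nat.card (T r n k) = 0 := by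
  haveI : IsEmpty (T r n k) := ⟨fun c => by
    have h1 := (lastFacts c.1 c.2.cf (lst c.1) c.2.getLast?).2.1
    rw [c.2.lst_length] at h1; omega⟩
  exact Nat.card_of_isEmpty

lemma card_T_of_kgt {r n k : ℕ} (h : n < k) : Nat.card (T r n k) = 0 := by
  haveI : IsEmpty (T r n k) := ⟨fun c => by
    have h1 := length_le_sum (lst c.1) c.2.lst_pos
    rw [c.2.lst_length, c.2.lst_sum] at h1; omega⟩
  exact Nat.card_of_isEmpty

lemma Tpred_base (r : ℕ) : Tpred r r r [List.replicate r 1] := by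
  refine ⟨List.isChain_singleton _, by simp, List.replicate r 1, by simp, by simp, by simp⟩

lemma card_T_rr (r : ℕ) : Nat.card (T r r r) = 1 := by
  rw [Nat.card_eq_one_iff_unique]
  constructor
  · constructor
    intro a b
    have key : ∀ c : T r r r, c.1 = [List.replicate r 1] := by
      intro c
      have hlen : c.1.length = 1 := by have := c.2.length_eq; omega
      obtain ⟨a', ha'⟩ := List.length_eq_one_iff.1 hlen
      have h2 := c.2.2.1
      rw [ha'] at h2 ⊢
      simp only [List.head?_cons, Option.some.injEq] at h2
      rw [h2]
    rw [Subtype.ext_iff, key a, key b]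
  · exact ⟨⟨_, Tpred_base r⟩⟩

lemma all_one : ∀ (Q : List ℕ), (∀ x ∈ Q, 0 < x) → Q.sum = Q.length → ∀ b ∈ Q, b = 1
  | [], _, _ => by simp
  | a :: l, hpos, hsum => by
    have ha : 0 < a := hpos a List.mem_cons_self
    have hl : l.length ≤ l.sum := length_le_sum l (fun x hx => hpos x (List.mem_cons_of_mem _ hx))
    simp only [List.sum_cons, List.length_cons] at hsum
    have ha1 : a = 1 := by omega
    have hls : l.sum = l.length := by omega
    intro b hb
    rcases List.mem_cons.1 hb with rfl | hb
    · exact ha1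
    · exact all_one l (fun x hx => hpos x (List.mem_cons_of_mem _ hx)) hls b hb

lemma eq_replicate_of {Q : List ℕ} (hpos : ∀ x ∈ Q, 0 < x) (h : Q.sum = Q.length) :
    Q = List.replicate Q.length 1 :=
  List.eq_replicate_iff.2 ⟨rfl, all_one Q hpos h⟩

lemma one_cons_replicate (m : ℕ) : 1 :: List.replicate m 1 = List.replicate m 1 ++ [1] := by
  rw [← List.replicate_succ, List.replicate_succ']

lemma cons_eq_append : ∀ (P : List ℕ), 1 :: P = P ++ [1] ↔ P = List.replicate P.length 1
  | [] => by simp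
  | a :: l => by
    constructor
    · intro h
      simp only [List.cons_append] at h
      obtain ⟨rfl, h2⟩ := List.cons_eq_cons.1 h
      have := (cons_eq_append l).1 h2
      simp [List.length_cons, List.replicate_succ, ← this]
    · intro h
      rw [h]
      exact one_cons_replicate _

lemma Tpred_concat {r n k : ℕ} {c : List (List ℕ)} {Q : List ℕ} (h : Tpred r n k c)
    (hc : coverN (lst c) Q) : Tpred r (n + 1) Q.length (c ++ [Q]) := by
  refine ⟨?_, ?_, Q, ?_, ?_, rfl⟩
  · unfold List.Chain'
    rw [List.isChain_append]
    refine ⟨h.1, List.isChain_singleton _, fun x hx y hy => ?_⟩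
    rw [h.getLast?] at hx
    simp only [Option.mem_def, Option.some.injEq, List.head?_cons] at hx hy
    subst hx; subst hy; exact hc
  · rw [List.head?_append_of_ne_nil _ h.ne_nil]; exact h.2.1
  · rw [List.getLast?_concat]
  · have := cover_sum hc; rw [h.lst_sum] at this; omega

def Trest (r n k : ℕ) := {c : List (List ℕ) // Tpred r n k c ∧ lst c ≠ List.replicate k 1}
def Tall (r n k : ℕ) := {c : List (List ℕ) // Tpred r n k c ∧ lst c = List.replicate k 1}

lemma finite_Trest (r n k : ℕ) : Finite (Trest r n k) := by
  haveI := finite_T r n k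
  exact Finite.of_injective (fun c => (⟨c.1, c.2.1⟩ : T r n k))
    (by intro a b h; apply Subtype.ext; exact congrArg (fun x : T r n k => x.1) h)

lemma finite_Tall (r n k : ℕ) : Finite (Tall r n k) := by
  haveI := finite_T r n k
  exact Finite.of_injective (fun c => (⟨c.1, c.2.1⟩ : T r n k))
    (by intro a b h; apply Subtype.ext; exact congrArg (fun x : T r n k => x.1) h)

lemma card_split (r n k : ℕ) :
    Nat.card (Trest r n k) + Nat.card (Tall r n k) = Nat.card (T r n k) := by
  classical
  haveI := finite_Trest r n k
  haveI := finite_Tall r n k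
  have e : Trest r n k ⊕ Tall r n k ≃ T r n k := by
    refine Equiv.trans (Equiv.sumComm _ _) ?_
    refine Equiv.trans (Equiv.sumCongr
      ((Equiv.subtypeSubtypeEquivSubtypeInter _ _).symm)
      ((Equiv.subtypeSubtypeEquivSubtypeInter
        (fun c => Tpred r n k c) (fun c => ¬ lst c = List.replicate k 1)).symm)) ?_
    exact Equiv.sumCompl _
  rw [← Nat.card_sum]
  exact Nat.card_congr e

lemma card_Tall_of_ne {r n k : ℕ} (h : n ≠ k) : Nat.card (Tall r n k) = 0 := by
  haveI : IsEmpty (Tall r n k) := ⟨fun c => by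
    have h1 := c.2.1.lst_sum
    rw [c.2.2] at h1
    simp at h1
    omega⟩
  exact Nat.card_of_isEmpty

lemma card_Tall_of_eq {r n : ℕ} : Nat.card (Tall r n n) = Nat.card (T r n n) := by
  have e : Tall r n n ≃ T r n n := by
    refine ⟨fun c => ⟨c.1, c.2.1⟩, fun c => ⟨c.1, c.2, ?_⟩, fun c => rfl, fun c => rfl⟩
    · have := eq_replicate_of c.2.lst_pos (by rw [c.2.lst_sum, c.2.lst_length])
      rwa [c.2.lst_length] at this
  exact Nat.card_congr e

lemma card_Trest_of_eq {r n : ℕ} : Nat.card (Trest r n n) = 0 := by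
  haveI : IsEmpty (Trest r n n) := ⟨fun c => by
    have := eq_replicate_of c.2.1.lst_pos (by rw [c.2.1.lst_sum, c.2.1.lst_length])
    rw [c.2.1.lst_length] at this
    exact c.2.2 this⟩
  exact Nat.card_of_isEmpty

lemma concat_inj {c₁ c₂ : List (List ℕ)} {Q₁ Q₂ : List ℕ}
    (h : c₁ ++ [Q₁] = c₂ ++ [Q₂]) : c₁ = c₂ ∧ Q₁ = Q₂ := by
  have hl := congrArg List.length h
  simp only [List.length_append, List.length_cons, List.length_nil] at hl
  have := List.append_inj h (by omega)
  exact ⟨this.1, by simpa using this.2⟩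

def gmap (r m j : ℕ) :
    ((T r m (j+1) × Fin (j+1)) ⊕ ((Trest r m j × Bool) ⊕ Tall r m j)) → List (List ℕ)
  | Sum.inl (c, i) => c.1 ++ [(lst c.1).set i.1 ((lst c.1).getD i.1 0 + 1)]
  | Sum.inr (Sum.inl (c, b)) => c.1 ++ [cond b (lst c.1 ++ [1]) (1 :: lst c.1)]
  | Sum.inr (Sum.inr c) => c.1 ++ [1 :: lst c.1]

lemma gmap_mem (r m j : ℕ) (x) : Tpred r (m+1) (j+1) (gmap r m j x) := by
  match x with
  | Sum.inl (c, i) =>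
    have hlen : (lst c.1).length = j + 1 := c.2.lst_length
    have hcov : coverN (lst c.1) ((lst c.1).set i.1 ((lst c.1).getD i.1 0 + 1)) :=
      Or.inr (Or.inr ⟨i.1, by rw [hlen]; exact i.isLt, rfl⟩)
    have h2 := Tpred_concat c.2 hcov
    show Tpred r (m+1) (j+1) (c.1 ++ [(lst c.1).set i.1 ((lst c.1).getD i.1 0 + 1)])
    rwa [List.length_set, hlen] at h2
  | Sum.inr (Sum.inl (c, b)) =>
    have hlen : (lst c.1).length = j := c.2.1.lst_length
    cases b
    · have hcov : coverN (lst c.1) (1 :: lst c.1) := Or.inl rfl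
      have h2 := Tpred_concat c.2.1 hcov
      show Tpred r (m+1) (j+1) (c.1 ++ [1 :: lst c.1])
      rwa [List.length_cons, hlen] at h2
    · have hcov : coverN (lst c.1) (lst c.1 ++ [1]) := Or.inr (Or.inl rfl)
      have h2 := Tpred_concat c.2.1 hcov
      show Tpred r (m+1) (j+1) (c.1 ++ [lst c.1 ++ [1]])
      rwa [List.length_append, hlen] at h2
  | Sum.inr (Sum.inr c) =>
    have hlen : (lst c.1).length = j := c.2.1.lst_length
    have hcov : coverN (lst c.1) (1 :: lst c.1) := Or.inl rfl
    have h2 := Tpred_concat c.2.1 hcov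
    show Tpred r (m+1) (j+1) (c.1 ++ [1 :: lst c.1])
    rwa [List.length_cons, hlen] at h2

def gfun (r m j : ℕ)
    (x : (T r m (j+1) × Fin (j+1)) ⊕ ((Trest r m j × Bool) ⊕ Tall r m j)) :
    T r (m+1) (j+1) := ⟨gmap r m j x, gmap_mem r m j x⟩

lemma lst_eq_of_val_eq {c c' : List (List ℕ)} (h : c = c') : lst c = lst c' := by rw [h]

lemma g_inj (r m j : ℕ) : Function.Injective (gfun r m j) := by
  rintro (⟨c, i⟩ | (⟨c, b⟩ | c)) (⟨c', i'⟩ | (⟨c', b'⟩ | c')) h <;>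
    have hv := congrArg (fun t : T r (m+1) (j+1) => t.1) h <;>
    simp only [gfun, gmap] at hv <;>
    obtain ⟨hc, hQ⟩ := concat_inj hv
  -- case 1-1
  · have hcc : c = c' := Subtype.ext hc
    subst hcc
    have hii : i = i' := by
      by_contra hne
      have hlen : (lst c.1).length = j + 1 := c.2.lst_length
      have hlt : i'.1 < (lst c.1).length := by rw [hlen]; exact i'.isLt
      have h1 : ((lst c.1).set i.1 ((lst c.1).getD i.1 0 + 1)).getD i'.1 0
          = (lst c.1).getD i'.1 0 := by
        simp [List.getD, List.getElem?_set_ne (fun hh : i.1 = i'.1 => hne (Fin.ext hh))]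
      have h2 : ((lst c.1).set i'.1 ((lst c.1).getD i'.1 0 + 1)).getD i'.1 0
          = (lst c.1).getD i'.1 0 + 1 := by
        simp [List.getD, List.getElem?_set_self hlt]
      rw [hQ, h2] at h1
      omega
    rw [hii]
  -- case 1-2
  · exfalso
    have e1 : (lst c.1).length = j + 1 := c.2.lst_length
    have e2 : (lst c'.1).length = j := c'.2.1.lst_length
    rw [lst_eq_of_val_eq hc, e2] at e1
    omega
  -- case 1-3
  · exfalso
    have e1 : (lst c.1).length = j + 1 := c.2.lst_length
    have e2 : (lst c'.1).length = j := c'.2.1.lst_length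
    rw [lst_eq_of_val_eq hc, e2] at e1
    omega
  -- case 2-1
  · exfalso
    have e1 : (lst c.1).length = j := c.2.1.lst_length
    have e2 : (lst c'.1).length = j + 1 := c'.2.lst_length
    rw [lst_eq_of_val_eq hc, e2] at e1
    omega
  -- case 2-2
  · have hcc : c = c' := Subtype.ext hc
    subst hcc
    have hlen : (lst c.1).length = j := c.2.1.lst_length
    have hrep : lst c.1 = List.replicate (lst c.1).length 1 → False := by
      intro hr
      rw [hlen] at hr
      exact c.2.2 hr
    cases b <;> cases b'
    · rfl
    · exfalso
      have hQ' : 1 :: lst c.1 = lst c.1 ++ [1] := hQ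
      exact hrep ((cons_eq_append _).1 hQ')
    · exfalso
      have hQ' : lst c.1 ++ [1] = 1 :: lst c.1 := hQ
      exact hrep ((cons_eq_append _).1 hQ'.symm)
    · rfl
  -- case 2-3
  · exfalso
    have h1 := c.2.2
    have h2 := c'.2.2
    rw [← lst_eq_of_val_eq hc] at h2
    exact h1 h2
  -- case 3-1
  · exfalso
    have e1 : (lst c.1).length = j := c.2.1.lst_length
    have e2 : (lst c'.1).length = j + 1 := c'.2.lst_length
    rw [lst_eq_of_val_eq hc, e2] at e1
    omega
  -- case 3-2
  · exfalso
    have h1 := c.2.2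
    have h2 := c'.2.2
    rw [← lst_eq_of_val_eq hc] at h2
    exact h2 h1
  -- case 3-3
  · have hcc : c = c' := Subtype.ext hc
    rw [hcc]

lemma getLast?_lst {c : List (List ℕ)} (h : c ≠ []) : c.getLast? = some (lst c) := by
  rw [List.getLast?_eq_getLast h]
  simp [lst, List.getLast?_eq_getLast h]

lemma g_surj (r m j : ℕ) (hm : r ≤ m) : Function.Surjective (gfun r m j) := by
  rintro ⟨c, hc⟩
  have hlen2 : c.length = m + 2 - r := by have := hc.length_eq; omega
  have hc'ne : c.dropLast ≠ [] := by
    have h1 : c.dropLast.length = c.length - 1 := List.length_dropLast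
    intro hh
    rw [hh] at h1
    simp at h1
    omega
  have hQ? : c.getLast? = some (lst c) := hc.getLast?
  have hsplit : c.dropLast ++ [lst c] = c := List.dropLast_append_getLast? _ hQ?
  obtain ⟨hcf', hcov⟩ := CF_dropLast hc.cf hc'ne
  have hP? : c.dropLast.getLast? = some (lst c.dropLast) := getLast?_lst hc'ne
  set P := lst c.dropLast with hPdef
  have hcovPQ : coverN P (lst c) := hcov P hP? (lst c) hQ?
  have hc' : Tpred r m P.length c.dropLast := by
    refine ⟨hcf'.1, hcf'.2, P, hP?, ?_, rfl⟩
    have h1 := cover_sum hcovPQ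
    have h2 := hc.lst_sum
    omega
  have hQlen := hc.lst_length
  rcases hcovPQ with h1 | h2 | ⟨i, hi, hset⟩
  · have hPlen : P.length = j := by rw [h1] at hQlen; simp at hQlen; omega
    by_cases hrep : P = List.replicate j 1
    · refine ⟨Sum.inr (Sum.inr ⟨c.dropLast, hPlen ▸ hc', hrep⟩), Subtype.ext ?_⟩
      show c.dropLast ++ [1 :: lst c.dropLast] = c
      rw [← hPdef, ← h1, hsplit]
    · refine ⟨Sum.inr (Sum.inl (⟨c.dropLast, hPlen ▸ hc', hrep⟩, false)), Subtype.ext ?_⟩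
      show c.dropLast ++ [1 :: lst c.dropLast] = c
      rw [← hPdef, ← h1, hsplit]
  · have hPlen : P.length = j := by rw [h2] at hQlen; simp at hQlen; omega
    by_cases hrep : P = List.replicate j 1
    · refine ⟨Sum.inr (Sum.inr ⟨c.dropLast, hPlen ▸ hc', hrep⟩), Subtype.ext ?_⟩
      show c.dropLast ++ [1 :: lst c.dropLast] = c
      have hrep' : P = List.replicate P.length 1 := by rw [hPlen]; exact hrep
      have h3 : 1 :: P = P ++ [1] := (cons_eq_append P).2 hrep'
      rw [← hPdef, h3, ← h2, hsplit]
    · refine ⟨Sum.inr (Sum.inl (⟨c.dropLast, hPlen ▸ hc', hrep⟩, true)), Subtype.ext ?_⟩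
      show c.dropLast ++ [lst c.dropLast ++ [1]] = c
      rw [← hPdef, ← h2, hsplit]
  · have hPlen : P.length = j + 1 := by rw [hset] at hQlen; simpa using hQlen
    refine ⟨Sum.inl (⟨c.dropLast, hPlen ▸ hc'⟩, ⟨i, hPlen ▸ hi⟩), Subtype.ext ?_⟩
    show c.dropLast ++ [(lst c.dropLast).set i ((lst c.dropLast).getD i 0 + 1)] = c
    rw [← hPdef, ← hset, hsplit]

lemma card_rec0 (r m j : ℕ) (hm : r ≤ m) :
    Nat.card (T r (m+1) (j+1)) =
      (j+1) * Nat.card (T r m (j+1)) + 2 * Nat.card (Trest r m j) + Nat.card (Tall r m j) := by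
  haveI := finite_T r m (j+1)
  haveI := finite_Trest r m j
  haveI := finite_Tall r m j
  rw [← Nat.card_eq_of_bijective _ ⟨g_inj r m j, g_surj r m j hm⟩]
  rw [Nat.card_sum, Nat.card_sum, Nat.card_prod, Nat.card_prod]
  simp only [Nat.card_eq_fintype_card, Fintype.card_fin, Fintype.card_bool]
  ring

lemma ank_eq (r n k : ℕ) : ank coverN (List.replicate r 1) n k = Nat.card (T r n k) := rfl

lemma card_diag (r : ℕ) : ∀ n, r ≤ n → Nat.card (T r n n) = 1 := by
  intro n
  induction n with
  | zero =>
    intro h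
    have h0 : r = 0 := by omega
    subst h0
    exact card_T_rr 0
  | succ m ih =>
    intro h
    rcases Nat.lt_or_ge r (m+1) with h1 | h2
    · have hm : r ≤ m := by omega
      rw [card_rec0 r m m hm, card_T_of_kgt (by omega), card_Trest_of_eq, card_Tall_of_eq,
        ih hm]
      ring
    · have : r = m + 1 := by omega
      subst this
      exact card_T_rr _
  
lemma card_T_r_ne {r k : ℕ} (h : k ≠ r) : Nat.card (T r r k) = 0 := by
  haveI : IsEmpty (T r r k) := ⟨fun c => by
    have hlen : c.1.length = 1 := by have := c.2.length_eq; omega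
    obtain ⟨a', ha'⟩ := List.length_eq_one_iff.1 hlen
    have h2 := c.2.2.1
    rw [ha'] at h2
    simp only [List.head?_cons, Option.some.injEq] at h2
    have h3 := c.2.lst_length
    have h4 : lst c.1 = a' := by rw [ha']; simp [lst]
    rw [h4, h2] at h3
    simp at h3
    exact h (h3.symm)⟩
  exact Nat.card_of_isEmpty

lemma card_rec_int (r k n : ℕ) (hr : 1 ≤ r) (hk : r ≤ k) (hn : r < n) :
    (Nat.card (T r n k) : ℤ) = k * Nat.card (T r (n-1) k) + 2 * Nat.card (T r (n-1) (k-1))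
      - (if n = k then 1 else 0) := by
  obtain ⟨m, rfl⟩ : ∃ m, n = m + 1 := ⟨n-1, by omega⟩
  obtain ⟨j, rfl⟩ : ∃ j, k = j + 1 := ⟨k-1, by omega⟩
  simp only [Nat.add_sub_cancel]
  have h0 := card_rec0 r m j (by omega)
  by_cases hmj : m = j
  · subst hmj
    rw [if_pos rfl, h0, card_Trest_of_eq, card_Tall_of_eq, card_diag r m (by omega)]
    push_cast
    ring
  · have hTrest : Nat.card (Trest r m j) = Nat.card (T r m j) := by
      have hs := card_split r m j
      rw [card_Tall_of_ne hmj] at hs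
      omega
    rw [if_neg (by omega), h0, hTrest, card_Tall_of_ne hmj]
    push_cast
    ring

lemma card_base (r : ℕ) (hr : 1 ≤ r) : ∀ n, r ≤ n → Nat.card (T r n r) = r ^ (n - r) := by
  intro n
  induction n with
  | zero =>
    intro h
    omega
  | succ m ih =>
    intro h
    rcases Nat.lt_or_ge r (m+1) with h1 | h2
    · have hm : r ≤ m := by omega
      have hint := card_rec_int r r (m+1) hr le_rfl (by omega)
      rw [if_neg (by omega), card_T_of_klt (by omega : r - 1 < r)] at hint
      simp only [Nat.add_sub_cancel] at hint
      rw [ih hm] at hint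
      have he : m + 1 - r = (m - r) + 1 := by omega
      have h2 : (Nat.card (T r (m+1) r) : ℤ) = (r:ℤ) ^ (m + 1 - r) := by
        rw [hint, he, pow_succ']
        push_cast
        ring
      exact_mod_cast h2
    · have : r = m + 1 := by omega
      subst this
      simp [card_T_rr]

noncomputable def Nc (r n k : ℕ) : ℝ := (Nat.card (T r n k) : ℝ)

lemma Nc_nonneg (r n k : ℕ) : 0 ≤ Nc r n k := Nat.cast_nonneg _

lemma Nc_zero_of_lt {r n k : ℕ} (h : n < r) : Nc r n k = 0 := by
  rw [Nc, card_T_of_nlt h]; simp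

lemma Nc_zero_of_klt {r n k : ℕ} (h : k < r) : Nc r n k = 0 := by
  rw [Nc, card_T_of_klt h]; simp

lemma rec_real (r k n : ℕ) (hr : 1 ≤ r) (hk : r ≤ k) (hn : r < n) :
    Nc r n k = k * Nc r (n-1) k + 2 * Nc r (n-1) (k-1) - (if n = k then 1 else 0) := by
  have h := card_rec_int r k n hr hk hn
  have h2 := congrArg (fun z : ℤ => (z : ℝ)) h
  simp only [Int.cast_add, Int.cast_sub, Int.cast_mul, Int.cast_natCast, Int.cast_ofNat,
    Int.cast_one, Int.cast_zero, apply_ite (fun z : ℤ => (z : ℝ))] at h2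
  exact h2

lemma growth (r : ℕ) (hr : 1 ≤ r) : ∀ j, r ≤ j → ∃ C : ℝ, 0 ≤ C ∧
    ∀ n, Nc r n j ≤ C * (j:ℝ)^n := by
  intro j hj
  induction j, hj using Nat.le_induction with
  | base =>
    refine ⟨1, zero_le_one, fun n => ?_⟩
    rcases Nat.lt_or_ge n r with h | h
    · rw [Nc_zero_of_lt h]; positivity
    · rw [Nc, card_base r hr n h, one_mul]
      push_cast
      exact pow_le_pow_right₀ (by exact_mod_cast hr) (by omega)
  | succ j hj ih =>
    obtain ⟨C, hC0, hC⟩ := ih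
    have hj1 : (0:ℝ) ≤ (j:ℝ) := Nat.cast_nonneg _
    have hmono : ∀ n : ℕ, (j:ℝ)^n ≤ ((j:ℝ)+1)^n :=
      fun n => pow_le_pow_left₀ hj1 (by linarith) n
    have key : ∀ n, Nc r n (j+1) ≤ (2*C+1) * (((j:ℝ)+1)^n - (j:ℝ)^n) := by
      intro n
      induction n using Nat.strong_induction_on with
      | _ n ihn =>
        rcases Nat.lt_or_ge n r with h | h
        · rw [Nc_zero_of_lt h]
          have := hmono n
          nlinarith
        · rcases Nat.eq_or_lt_of_le h with h' | h'
          · subst h'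
            rw [Nc, card_T_r_ne (by omega)]
            have := hmono r
            simp only [Nat.cast_zero]
            nlinarith
          · obtain ⟨m, rfl⟩ : ∃ m, n = m + 1 := ⟨n-1, by omega⟩
            have hrec := rec_real r (j+1) (m+1) hr (by omega) h'
            simp only [Nat.add_sub_cancel] at hrec
            have h1 : Nc r (m+1) (j+1) ≤ ((j:ℝ)+1) * Nc r m (j+1) + 2 * Nc r m j := by
              rw [hrec]
              push_cast
              split_ifs <;> nlinarith [Nc_nonneg r m (j+1), Nc_nonneg r m j]
            have h2 := ihn m (by omega)
            have h3 := hC m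
            have hp1 : ((j:ℝ)+1)^(m+1) = ((j:ℝ)+1) * ((j:ℝ)+1)^m := by ring
            have hp2 : (j:ℝ)^(m+1) = (j:ℝ) * (j:ℝ)^m := by ring
            have hjm : (0:ℝ) ≤ (j:ℝ)^m := pow_nonneg hj1 m
            nlinarith [Nc_nonneg r m (j+1)]
    refine ⟨2*C+1, by positivity, fun n => ?_⟩
    have h1 := key n
    have h2 : (0:ℝ) ≤ (j:ℝ)^n := pow_nonneg hj1 n
    have h3 : ((j:ℕ):ℝ) + 1 = (((j+1):ℕ):ℝ) := by push_cast; ring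
    calc Nc r n (j+1) ≤ (2*C+1) * (((j:ℝ)+1)^n - (j:ℝ)^n) := h1
      _ ≤ (2*C+1) * ((j:ℝ)+1)^n := by nlinarith
      _ = (2*C+1) * (((j+1):ℕ):ℝ)^n := by rw [h3]

lemma summable_Nc (r : ℕ) (hr : 1 ≤ r) (j : ℕ) {x : ℝ} (hx0 : 0 ≤ x)
    (hx : (j:ℝ) * x < 1) : Summable (fun n => Nc r n j * x^n) := by
  rcases Nat.lt_or_ge j r with h | h
  · exact summable_zero.congr (fun n => by rw [Nc_zero_of_klt h, zero_mul])
  · obtain ⟨C, hC0, hC⟩ := growth r hr j h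
    have hgeo : Summable (fun n => C * ((j:ℝ)*x)^n) :=
      (summable_geometric_of_lt_one (by positivity) hx).mul_left C
    apply Summable.of_nonneg_of_le
      (fun n => mul_nonneg (Nc_nonneg r n j) (pow_nonneg hx0 n)) (fun n => ?_) hgeo
    rw [mul_pow]
    calc Nc r n j * x^n ≤ (C * (j:ℝ)^n) * x^n :=
          mul_le_mul_of_nonneg_right (hC n) (pow_nonneg hx0 n)
      _ = C * ((j:ℝ)^n * x^n) := by ring

noncomputable def Sv (r j : ℕ) (x : ℝ) : ℝ := ∑' n, Nc r n j * x^n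

lemma Sv_zero_of_klt {r j : ℕ} (h : j < r) (x : ℝ) : Sv r j x = 0 := by
  rw [Sv]
  convert tsum_zero with n
  rw [Nc_zero_of_klt h, zero_mul]

set_option maxHeartbeats 1000000 in
lemma FE (r : ℕ) (hr : 1 ≤ r) (j : ℕ) (hj : r ≤ j) {x : ℝ} (hx0 : 0 < x)
    (hx : (j:ℝ) * x < 1) :
    Sv r j x = (if j = r then x^r else 0) + (j:ℝ)*x*(Sv r j x) + 2*x*(Sv r (j-1) x)
      - (if r < j then x^j else 0) := by
  have hx0' : 0 ≤ x := le_of_lt hx0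
  have hxj : ((j-1:ℕ):ℝ) * x < 1 :=
    lt_of_le_of_lt (mul_le_mul_of_nonneg_right (Nat.cast_le.2 (by omega)) hx0') hx
  have S1 : Summable (fun n => Nc r n j * x^n) := summable_Nc r hr j hx0' hx
  have S2 : Summable (fun n => Nc r n (j-1) * x^n) := summable_Nc r hr (j-1) hx0' hxj
  have SA : Summable (fun m => Nc r (m+r) j * x^(m+r)) :=
    (summable_nat_add_iff r).2 S1
  have SB : Summable (fun m => Nc r (m+r) (j-1) * x^(m+r)) :=
    (summable_nat_add_iff r).2 S2
  have SC : Summable (fun m : ℕ => if m + (r+1) = j then x^(m+r+1) else 0) := by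
    apply summable_of_ne_finset_zero (s := Finset.range (j+1))
    intro m hm
    rw [Finset.mem_range, not_lt] at hm
    rw [if_neg (by omega)]
  -- head of the series
  have head : ∑ i ∈ Finset.range (r+1), Nc r i j * x^i = (if j = r then x^r else 0) := by
    rw [Finset.sum_range_succ]
    have h0 : ∑ i ∈ Finset.range r, Nc r i j * x^i = 0 :=
      Finset.sum_eq_zero (fun i hi => by
        rw [Nc_zero_of_lt (Finset.mem_range.1 hi), zero_mul])
    rw [h0, zero_add]
    by_cases hjr : j = r
    · subst hjr
      rw [if_pos rfl, Nc, card_T_rr]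
      simp
    · rw [if_neg hjr, Nc, card_T_r_ne hjr]
      simp
  -- A = Sv r j x, B = Sv r (j-1) x
  have headA : ∑ i ∈ Finset.range r, Nc r i j * x^i = 0 :=
    Finset.sum_eq_zero (fun i hi => by rw [Nc_zero_of_lt (Finset.mem_range.1 hi), zero_mul])
  have headB : ∑ i ∈ Finset.range r, Nc r i (j-1) * x^i = 0 :=
    Finset.sum_eq_zero (fun i hi => by rw [Nc_zero_of_lt (Finset.mem_range.1 hi), zero_mul])
  have hA : ∑' m, Nc r (m+r) j * x^(m+r) = Sv r j x := by
    have := Summable.sum_add_tsum_nat_add r S1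
    rw [headA, zero_add] at this
    exact this
  have hB : ∑' m, Nc r (m+r) (j-1) * x^(m+r) = Sv r (j-1) x := by
    have := Summable.sum_add_tsum_nat_add r S2
    rw [headB, zero_add] at this
    exact this
  -- value of the indicator series
  have hC : (∑' m : ℕ, if m + (r+1) = j then x^(m+r+1) else 0)
      = (if r < j then x^j else 0) := by
    by_cases hrj : r < j
    · rw [if_pos hrj, tsum_eq_single (j-r-1) ?_]
      · rw [if_pos (by omega)]
        congr 1
        omega
      · intro m hm
        rw [if_neg (by omega)]
    · rw [if_neg hrj]
      have hjr : j = r := by omega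
      convert tsum_zero with m
      rw [if_neg (by omega)]
  -- body via the recurrence
  have body : ∀ m : ℕ, Nc r (m+(r+1)) j * x^(m+(r+1)) =
      (j:ℝ)*x*(Nc r (m+r) j * x^(m+r)) + 2*x*(Nc r (m+r) (j-1) * x^(m+r))
        - (if m + (r+1) = j then x^(m+r+1) else 0) := by
    intro m
    have hrec := rec_real r j (m+r+1) hr hj (by omega)
    simp only [Nat.add_sub_cancel] at hrec
    have hmr : m + (r+1) = m + r + 1 := by omega
    rw [hmr, hrec, sub_mul, add_mul, ite_mul, one_mul, zero_mul]
    have hps : x^(m+r+1) = x^(m+r) * x := pow_succ x (m+r)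
    rw [hps]
    ring_nf
  -- assemble
  have split1 := (Summable.sum_add_tsum_nat_add (r+1) S1).symm
  rw [head] at split1
  have hbody : ∑' m, Nc r (m+(r+1)) j * x^(m+(r+1)) =
      (j:ℝ)*x*(Sv r j x) + 2*x*(Sv r (j-1) x) - (if r < j then x^j else 0) := by
    rw [tsum_congr body, Summable.tsum_sub (((SA.mul_left _)).add ((SB.mul_left _))) SC]
    rw [Summable.tsum_add (SA.mul_left _) (SB.mul_left _), tsum_mul_left, tsum_mul_left, hA, hB, hC]
  rw [hbody] at split1
  rw [Sv] at split1 ⊢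
  linarith [split1]

lemma Sv_closed (r : ℕ) (hr : 1 ≤ r) (D : ℕ → Polynomial ℤ) (hDr : D r = 1)
    (hDk : ∀ j, r < j → D j = 2 * D (j - 1) -
      ∏ i ∈ Finset.Ico r j, (1 - (i : Polynomial ℤ) * Polynomial.X)) :
    ∀ j, r ≤ j → ∀ x : ℝ, 0 < x → (j:ℝ) * x < 1 →
      Sv r j x * ∏ i ∈ Finset.Icc r j, (1 - (i:ℝ)*x)
        = x^j * Polynomial.aeval x (D j) := by
  intro j hj
  induction j, hj using Nat.le_induction with
  | base =>
    intro x hx0 hx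
    have hfe := FE r hr r le_rfl hx0 hx
    rw [if_pos rfl, if_neg (lt_irrefl r), Sv_zero_of_klt (show r - 1 < r by omega) x] at hfe
    rw [Finset.Icc_self, Finset.prod_singleton, hDr, map_one, mul_one]
    linear_combination hfe
  | succ j hj ih =>
    intro x hx0 hx
    have hxj : (j:ℝ) * x < 1 := by
      have hx' := hx
      push_cast at hx'
      nlinarith [hx', hx0]
    have hfe := FE r hr (j+1) (by omega) hx0 hx
    rw [if_neg (by omega), if_pos (by omega)] at hfe
    simp only [Nat.add_sub_cancel] at hfe
    have hPj := ih x hx0 hxj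
    -- polynomial identity evaluated at x
    have hpoly : (Polynomial.aeval x (D (j+1)) : ℝ)
        = 2 * Polynomial.aeval x (D j) - ∏ i ∈ Finset.Icc r j, (1 - (i:ℝ)*x) := by
      have h1 := congrArg (Polynomial.aeval x (R := ℤ)) (hDk (j+1) (by omega))
      simp only [Nat.add_sub_cancel, map_sub, map_mul, map_prod, map_one,
        Polynomial.aeval_X, Polynomial.aeval_natCast, map_ofNat] at h1
      rw [← Finset.Ico_add_one_right_eq_Icc]
      exact h1
    rw [Finset.prod_Icc_succ_top (by omega : r ≤ j + 1)]
    push_cast at hfe hpoly ⊢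
    linear_combination (∏ i ∈ Finset.Icc r j, (1 - (i:ℝ)*x)) * hfe + 2*x*hPj
      - x^(j+1)*hpoly

lemma prodfac (r k : ℕ) (h : r < k) :
    ∏ i ∈ Finset.Icc r (k-1), (k - i) = (k-r).factorial := by
  rw [← Finset.prod_Ico_id_eq_factorial (k-r)]
  apply Finset.prod_nbij' (fun i => k - i) (fun j => k - j)
  · intro a ha
    rw [Finset.mem_Icc] at ha
    rw [Finset.mem_Ico]
    omega
  · intro a ha
    rw [Finset.mem_Ico] at ha
    rw [Finset.mem_Icc]
    omega
  · intro a ha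
    rw [Finset.mem_Icc] at ha
    omega
  · intro a ha
    rw [Finset.mem_Ico] at ha
    omega
  · intro a _
    rfl

lemma cast_aeval (p : Polynomial ℤ) (q : ℚ) :
    ((Polynomial.aeval q p : ℚ) : ℝ) = Polynomial.aeval (q : ℝ) p := by
  rw [Polynomial.aeval_def, Polynomial.aeval_def]
  have h := Polynomial.hom_eval₂ p (algebraMap ℤ ℚ) (Rat.castHom ℝ) q
  calc ((Polynomial.eval₂ (algebraMap ℤ ℚ) q p : ℚ) : ℝ)
      = (Rat.castHom ℝ) (Polynomial.eval₂ (algebraMap ℤ ℚ) q p) := rfl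
    _ = Polynomial.eval₂ ((Rat.castHom ℝ).comp (algebraMap ℤ ℚ)) ((Rat.castHom ℝ) q) p := h
    _ = Polynomial.eval₂ (algebraMap ℤ ℝ) ((q : ℝ)) p := by
        congr 1

end S14

theorem stmt14 (r : ℕ) (hr : 1 ≤ r) (α : List ℕ) (hα : α = List.replicate r 1)
    (k : ℕ) (hk : r ≤ k)
    (D : ℕ → Polynomial ℤ) (hDr : D r = 1)
    (hDk : ∀ j, r < j →
      D j = 2 * D (j - 1) -
        ∏ i ∈ Finset.Ico r j, (1 - (i : Polynomial ℤ) * Polynomial.X)) :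
    Filter.Tendsto (fun n => (ank coverN α n k : ℝ) / (k : ℝ) ^ n) Filter.atTop
      (nhds (((Polynomial.aeval ((k : ℚ))⁻¹ (D k) : ℚ) : ℝ) /
        ((Nat.factorial (k - r) : ℝ) * (k : ℝ) ^ r))) := by
  classical
  subst hα
  have hk1 : 1 ≤ k := le_trans hr hk
  have hk0 : (0:ℝ) < (k:ℝ) := by exact_mod_cast hk1
  set x : ℝ := ((k:ℝ))⁻¹ with hxdef
  have hx0 : 0 < x := by positivity
  have hxky : x * (k:ℝ) = 1 := inv_mul_cancel₀ (ne_of_gt hk0)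
  have hfun : ∀ n, (ank coverN (List.replicate r 1) n k : ℝ) / (k:ℝ)^n
      = S14.Nc r n k * x^n := by
    intro n
    rw [S14.ank_eq, div_eq_mul_inv, ← inv_pow]
    rfl
  have hxq : ((((k:ℚ))⁻¹ : ℚ) : ℝ) = x := by push_cast; rfl
  have hcast : ((Polynomial.aeval ((k:ℚ))⁻¹ (D k) : ℚ) : ℝ)
      = Polynomial.aeval x (D k) := by
    rw [S14.cast_aeval, hxq]
  rcases eq_or_lt_of_le hk with hkr | hkr
  · -- case k = r
    subst hkr
    have hev : ∀ n, r ≤ n → S14.Nc r n r * x^n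
        = ((Polynomial.aeval ((r:ℚ))⁻¹ (D r) : ℚ) : ℝ)
          / ((Nat.factorial (r - r) : ℝ) * (r:ℝ)^r) := by
      intro n hn
      rw [S14.Nc, S14.card_base r hr n hn, hcast, hDr, map_one]
      simp only [Nat.sub_self, Nat.factorial_zero, Nat.cast_one, one_mul]
      push_cast
      rw [eq_div_iff (by positivity)]
      have hpp : (r:ℝ)^(n-r) * (r:ℝ)^r = (r:ℝ)^n := by
        rw [← pow_add]; congr 1; omega
      calc (r:ℝ)^(n-r) * x^n * (r:ℝ)^r = ((r:ℝ)^(n-r) * (r:ℝ)^r) * x^n := by ring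
        _ = (r:ℝ)^n * x^n := by rw [hpp]
        _ = ((r:ℝ) * x)^n := by rw [mul_pow]
        _ = 1 := by rw [mul_comm (r:ℝ) x, hxky, one_pow]
    refine Filter.Tendsto.congr' ?_ tendsto_const_nhds
    filter_upwards [Filter.eventually_ge_atTop r] with n hn
    rw [hfun n]
    exact (hev n hn).symm
  · -- case r < k
    have hxlt : ((k-1:ℕ):ℝ) * x < 1 := by
      have h1 : ((k-1:ℕ):ℝ) < (k:ℝ) := by exact_mod_cast (by omega : k - 1 < k)
      calc ((k-1:ℕ):ℝ) * x < (k:ℝ) * x := mul_lt_mul_of_pos_right h1 hx0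
        _ = 1 := by rw [mul_comm]; exact hxky
    set f : ℕ → ℝ := fun m => 2 * S14.Nc r m (k-1) * x^(m+1)
      - (if m + 1 = k then x^(m+1) else 0) with hfdef
    have Sf1 : Summable (fun m => 2 * S14.Nc r m (k-1) * x^(m+1)) :=
      ((S14.summable_Nc r hr (k-1) hx0.le hxlt).mul_left (2*x)).congr
        (fun m => by rw [pow_succ]; ring)
    have Sf2 : Summable (fun m : ℕ => (if m + 1 = k then x^(m+1) else 0)) := by
      apply summable_of_ne_finset_zero (s := Finset.range k)
      intro m hm
      rw [Finset.mem_range, not_lt] at hm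
      rw [if_neg (by omega)]
    have Sf : Summable f := Sf1.sub Sf2
    have hpartial : ∀ N, r ≤ N →
        S14.Nc r N k * x^N = ∑ m ∈ Finset.range N, f m := by
      intro N hN
      induction N, hN using Nat.le_induction with
      | base =>
        rw [S14.Nc, S14.card_T_r_ne (by omega : k ≠ r)]
        rw [Nat.cast_zero, zero_mul]
        symm
        apply Finset.sum_eq_zero
        intro m hm
        have hm' : m < r := Finset.mem_range.1 hm
        simp only [hfdef]
        rw [S14.Nc_zero_of_lt hm', if_neg (by omega)]
        ring
      | succ N hN ih =>
        have hrec := S14.rec_real r k (N+1) hr hk (by omega)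
        simp only [Nat.add_sub_cancel] at hrec
        rw [Finset.sum_range_succ, ← ih, hrec]
        simp only [hfdef]
        have hps : x^(N+1) = x^N * x := pow_succ x N
        rw [hps]
        have hkey : (k:ℝ) * S14.Nc r N k * (x^N * x) = S14.Nc r N k * x^N := by
          have hkx : (k:ℝ) * x = 1 := by rw [mul_comm]; exact hxky
          calc (k:ℝ) * S14.Nc r N k * (x^N * x)
              = S14.Nc r N k * x^N * ((k:ℝ) * x) := by ring
            _ = S14.Nc r N k * x^N := by rw [hkx, mul_one]
        rw [sub_mul, add_mul, ite_mul, one_mul, zero_mul, hkey]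
        ring
    have hps : Filter.Tendsto (fun N => ∑ m ∈ Finset.range N, f m)
        Filter.atTop (nhds (∑' m, f m)) := Sf.hasSum.tendsto_sum_nat
    have htsum : (∑' m, f m) = 2 * x * S14.Sv r (k-1) x - x^k := by
      rw [hfdef, Summable.tsum_sub Sf1 Sf2]
      congr 1
      · rw [tsum_congr (fun m : ℕ =>
          show 2 * S14.Nc r m (k-1) * x^(m+1) = (2*x) * (S14.Nc r m (k-1) * x^m) by
            rw [pow_succ]; ring), tsum_mul_left]
        rfl
      · rw [tsum_eq_single (k-1) ?_]
        · rw [if_pos (by omega)]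
          congr 1
          omega
        · intro m hm
          rw [if_neg (by omega)]
    have hclosed := S14.Sv_closed r hr D hDr hDk (k-1) (by omega) x hx0 hxlt
    set P : ℝ := ∏ i ∈ Finset.Icc r (k-1), (1 - (i:ℝ)*x) with hPdef
    set A : ℝ := (Polynomial.aeval x (D (k-1)) : ℝ) with hAdef
    set Sv : ℝ := S14.Sv r (k-1) x with hSvdef
    have t1 : Sv * P = x^(k-1) * A := hclosed
    have hPval : P * (k:ℝ)^(k-r) = (Nat.factorial (k-r) : ℝ) := by
      have hfac : ∀ i ∈ Finset.Icc r (k-1), (1 - (i:ℝ)*x) = ((k-i:ℕ):ℝ) * x := by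
        intro i hi
        rw [Finset.mem_Icc] at hi
        have hik : i ≤ k := by omega
        rw [Nat.cast_sub hik]
        have hh : ((k:ℝ) - i) * x = (k:ℝ)*x - i*x := by ring
        rw [hh, mul_comm (k:ℝ) x, hxky]
      rw [hPdef, Finset.prod_congr rfl hfac, Finset.prod_mul_distrib,
        Finset.prod_const, Nat.card_Icc]
      have hcard : k - 1 + 1 - r = k - r := by omega
      rw [hcard]
      have hprod : (∏ i ∈ Finset.Icc r (k-1), ((k-i:ℕ):ℝ))
          = ((k-r).factorial : ℝ) := by
        rw [← Nat.cast_prod]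
        exact_mod_cast congrArg (fun z : ℕ => (z:ℝ)) (S14.prodfac r k hkr)
      rw [hprod]
      calc ((k-r).factorial : ℝ) * x^(k-r) * (k:ℝ)^(k-r)
          = ((k-r).factorial : ℝ) * ((x*(k:ℝ))^(k-r)) := by rw [mul_pow]; ring
        _ = ((k-r).factorial : ℝ) := by rw [hxky, one_pow, mul_one]
    have hF0 : ((Nat.factorial (k-r) : ℝ) * (k:ℝ)^r) ≠ 0 := by positivity
    have hkk : (k:ℝ)^(k-r) * (k:ℝ)^r = (k:ℝ)^k := by rw [← pow_add]; congr 1; omega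
    have hxk1 : x * x^(k-1) = x^k := by rw [← pow_succ']; congr 1; omega
    have hxk : x^k * (k:ℝ)^k = 1 := by rw [← mul_pow, hxky, one_pow]
    have hpoly : (Polynomial.aeval x (D k) : ℝ) = 2*A - P := by
      have h1 := congrArg (Polynomial.aeval x (R := ℤ)) (hDk k hkr)
      simp only [map_sub, map_mul, map_prod, map_one, Polynomial.aeval_X,
        Polynomial.aeval_natCast, map_ofNat] at h1
      rw [hAdef, hPdef, ← Finset.Ico_add_one_right_eq_Icc]
      have hk' : k - 1 + 1 = k := by omega
      rw [hk']
      exact h1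
    have hQ : (2*x*Sv - x^k) * ((Nat.factorial (k-r) : ℝ) * (k:ℝ)^r) = 2*A - P := by
      calc (2*x*Sv - x^k) * ((Nat.factorial (k-r) : ℝ) * (k:ℝ)^r)
          = (2*x*Sv - x^k) * ((P * (k:ℝ)^(k-r)) * (k:ℝ)^r) := by rw [hPval]
        _ = (2*x*(Sv*P) - x^k*P) * ((k:ℝ)^(k-r) * (k:ℝ)^r) := by ring
        _ = (2*x*(x^(k-1)*A) - x^k*P) * (k:ℝ)^k := by rw [t1, hkk]
        _ = (2*(x*x^(k-1))*A - x^k*P) * (k:ℝ)^k := by ring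
        _ = (2*x^k*A - x^k*P) * (k:ℝ)^k := by rw [hxk1]
        _ = (2*A - P) * (x^k * (k:ℝ)^k) := by ring
        _ = 2*A - P := by rw [hxk, mul_one]
    have hTgt : ((Polynomial.aeval ((k:ℚ))⁻¹ (D k) : ℚ) : ℝ)
        / ((Nat.factorial (k-r) : ℝ) * (k:ℝ)^r) = ∑' m, f m := by
      rw [htsum, hcast, hpoly, ← hQ]
      exact mul_div_cancel_right₀ _ hF0
    have hfeq : (fun n => (ank coverN (List.replicate r 1) n k : ℝ) / (k:ℝ)^n)
        = fun n => S14.Nc r n k * x^n := funext hfun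
    rw [hfeq, hTgt]
    refine Filter.Tendsto.congr' ?_ hps
    filter_upwards [Filter.eventually_ge_atTop r] with n hn
    exact (hpartial n hn).symm
end

section
/- Let d ≥ 2 be an integer, let α be a composition with r parts, and let k ≥ r with k ≥ 1. Then: (1) there exist non-negative integers c_1,…,c_k with c_k = 1 and a polynomial p ∈ ℤ[t] such that L_k^α[𝔖^d](t) · ∏_{i=1}^{k} (1 − it)^{c_i} = p(t); and (2) there is a positive real constant C such that a_{n,k}^α / k^n → C as n → ∞, where a_{n,k}^α is the number of saturated chains in 𝔖^d starting at α and ending at a composition of n with k parts. -/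
/-- Covering relation of the poset 𝔖^d: insert a part 1 at any position,
increase one part by 1, or replace a part `q` by the two adjacent parts
`(q − s + 1, s)` for some `2 ≤ s < d` with `q − s + 1 ≥ 2`. -/
def coverS (d : ℕ) (P Q : List ℕ) : Prop :=
  (∃ i, i ≤ P.length ∧ Q = P.take i ++ 1 :: P.drop i) ∨
  (∃ j, j < P.length ∧ Q = P.set j (P.getD j 0 + 1)) ∨
  (∃ j, j < P.length ∧ ∃ s, 2 ≤ s ∧ s < d ∧ 2 ≤ P.getD j 0 - s + 1 ∧
    Q = P.take j ++ (P.getD j 0 - s + 1) :: s :: P.drop (j + 1))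


namespace S18

/-! ### Cover machinery -/

def gIns (l : List ℕ) (i : ℕ) : List ℕ := l.take i ++ 1 :: l.drop i
def gInc (l : List ℕ) (j : ℕ) : List ℕ := l.set j (l.getD j 0 + 1)
def gSpl (l : List ℕ) (p : ℕ × ℕ) : List ℕ :=
  l.take p.1 ++ (l.getD p.1 0 - p.2 + 1) :: p.2 :: l.drop (p.1 + 1)

def insIdx (l : List ℕ) : Finset ℕ :=
  (Finset.range (l.length + 1)).filter (fun i => i = 0 ∨ l.getD (i-1) 0 ≠ 1)
def splIdx (d : ℕ) (l : List ℕ) : Finset (ℕ × ℕ) :=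
  ((Finset.range l.length) ×ˢ (Finset.Icc 2 (d-1))).filter
    (fun p => p.2 + 1 ≤ l.getD p.1 0)

def coversF (d : ℕ) (l : List ℕ) : Finset (List ℕ) :=
  ((insIdx l).image (gIns l)) ∪ ((Finset.range l.length).image (gInc l)) ∪
    ((splIdx d l).image (gSpl l))

lemma decomp (l : List ℕ) {j : ℕ} (hj : j < l.length) :
    l.take j ++ l.getD j 0 :: l.drop (j+1) = l := by
  rw [List.getD_eq_getElem _ _ hj, ← List.drop_eq_getElem_cons hj, List.take_append_drop]

lemma set_eq (l : List ℕ) {j : ℕ} (hj : j < l.length) (v : ℕ) :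
    l.set j v = l.take j ++ v :: l.drop (j+1) := by
  rw [List.set_eq_take_append_cons_drop, if_pos hj]

lemma sum_gIns (l : List ℕ) (i : ℕ) : (gIns l i).sum = l.sum + 1 := by
  have := List.sum_take_add_sum_drop l i
  simp [gIns, List.sum_append]
  omega

lemma length_gIns (l : List ℕ) {i : ℕ} (hi : i ≤ l.length) :
    (gIns l i).length = l.length + 1 := by
  simp only [gIns, List.length_append, List.length_take, List.length_cons, List.length_drop]
  omega

lemma sum_gInc (l : List ℕ) {j : ℕ} (hj : j < l.length) : (gInc l j).sum = l.sum + 1 := by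
  have h2 : (l.take j).sum + (l.getD j 0 + (l.drop (j+1)).sum) = l.sum := by
    conv_rhs => rw [← decomp l hj]
    rw [List.sum_append, List.sum_cons]
  rw [gInc, set_eq l hj, List.sum_append, List.sum_cons]
  omega

lemma length_gInc (l : List ℕ) (j : ℕ) : (gInc l j).length = l.length := by
  simp [gInc]

lemma sum_gSpl (l : List ℕ) {p : ℕ × ℕ} (hj : p.1 < l.length)
    (hs : p.2 + 1 ≤ l.getD p.1 0) : (gSpl l p).sum = l.sum + 1 := by
  have h2 : (l.take p.1).sum + (l.getD p.1 0 + (l.drop (p.1+1)).sum) = l.sum := by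
    conv_rhs => rw [← decomp l hj]
    rw [List.sum_append, List.sum_cons]
  rw [gSpl, List.sum_append, List.sum_cons, List.sum_cons]
  omega

lemma length_gSpl (l : List ℕ) {p : ℕ × ℕ} (hj : p.1 < l.length) :
    (gSpl l p).length = l.length + 1 := by
  simp only [gSpl, List.length_append, List.length_take, List.length_cons, List.length_drop]
  omega

lemma gIns_step (l : List ℕ) {i : ℕ} (h : i < l.length) (h1 : l.getD i 0 = 1) :
    gIns l (i+1) = gIns l i := by
  rw [gIns, gIns, List.take_succ, List.drop_eq_getElem_cons h, List.getElem?_eq_getElem h]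
  rw [List.getD_eq_getElem _ _ h] at h1
  rw [h1]
  simp

lemma gIns_canon (l : List ℕ) : ∀ i, i ≤ l.length →
    ∃ i', i' ∈ insIdx l ∧ gIns l i' = gIns l i := by
  intro i
  induction i with
  | zero => intro _; exact ⟨0, by simp [insIdx], rfl⟩
  | succ i ih =>
    intro hi
    by_cases h1 : l.getD i 0 = 1
    · obtain ⟨i', h', he⟩ := ih (by omega)
      exact ⟨i', h', he.trans (gIns_step l (by omega) h1).symm⟩
    · exact ⟨i+1, Finset.mem_filter.2 ⟨Finset.mem_range.2 (by omega),
        Or.inr (by simpa using h1)⟩, rfl⟩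

lemma mem_coversF {d : ℕ} {l γ : List ℕ} : γ ∈ coversF d l ↔ coverS d l γ := by
  constructor
  · intro h
    simp only [coversF, Finset.mem_union, Finset.mem_image] at h
    rcases h with (⟨i, hi, rfl⟩ | ⟨j, hj, rfl⟩) | ⟨⟨j, s⟩, hjs, rfl⟩
    · simp only [insIdx, Finset.mem_filter, Finset.mem_range] at hi
      exact Or.inl ⟨i, by omega, rfl⟩
    · exact Or.inr (Or.inl ⟨j, by simpa using hj, rfl⟩)
    · simp only [splIdx, Finset.mem_filter, Finset.mem_product, Finset.mem_range,
        Finset.mem_Icc] at hjs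
      exact Or.inr (Or.inr ⟨j, hjs.1.1, s, hjs.1.2.1, by omega, by omega, rfl⟩)
  · intro h
    rcases h with ⟨i, hi, rfl⟩ | ⟨j, hj, rfl⟩ | ⟨j, hj, s, hs2, hsd, hq, rfl⟩
    · obtain ⟨i', h', he⟩ := gIns_canon l i hi
      exact Finset.mem_union_left _ (Finset.mem_union_left _
        (Finset.mem_image.2 ⟨i', h', he⟩))
    · exact Finset.mem_union_left _ (Finset.mem_union_right _
        (Finset.mem_image.2 ⟨j, by simpa using hj, rfl⟩))
    · refine Finset.mem_union_right _ (Finset.mem_image.2 ⟨(j, s), ?_, rfl⟩)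
      simp only [splIdx, Finset.mem_filter, Finset.mem_product, Finset.mem_range,
        Finset.mem_Icc]
      refine ⟨⟨hj, hs2, by omega⟩, by omega⟩

lemma sum_of_mem_coversF {d : ℕ} {l γ : List ℕ} (h : γ ∈ coversF d l) :
    γ.sum = l.sum + 1 := by
  simp only [coversF, Finset.mem_union, Finset.mem_image] at h
  rcases h with (⟨i, hi, rfl⟩ | ⟨j, hj, rfl⟩) | ⟨⟨j, s⟩, hjs, rfl⟩
  · exact sum_gIns l i
  · exact sum_gInc l (by simpa using hj)
  · simp only [splIdx, Finset.mem_filter, Finset.mem_product, Finset.mem_range] at hjs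
    exact sum_gSpl l hjs.1.1 hjs.2

lemma length_of_mem_coversF {d : ℕ} {l γ : List ℕ} (h : γ ∈ coversF d l) :
    γ.length = l.length ∨ γ.length = l.length + 1 := by
  simp only [coversF, Finset.mem_union, Finset.mem_image] at h
  rcases h with (⟨i, hi, rfl⟩ | ⟨j, hj, rfl⟩) | ⟨⟨j, s⟩, hjs, rfl⟩
  · simp only [insIdx, Finset.mem_filter, Finset.mem_range] at hi
    exact Or.inr (length_gIns l (by omega))
  · exact Or.inl (length_gInc l j)
  · simp only [splIdx, Finset.mem_filter, Finset.mem_product, Finset.mem_range] at hjs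
    exact Or.inr (length_gSpl l hjs.1.1)


/-! ### Chains -/

def chainsF (d k : ℕ) (l : List ℕ) (n : ℕ) : Finset (List (List ℕ)) :=
  if h : n ≤ l.sum then (if n = l.sum ∧ l.length = k then {[l]} else ∅)
  else ((coversF d l).attach).biUnion
    (fun γ => (chainsF d k γ.1 n).image (l :: ·))
termination_by n - l.sum
decreasing_by
  have := sum_of_mem_coversF γ.2
  omega

lemma head?_eq {α : Type*} {c : List α} {l : α} (h : c.head? = some l) :
    ∃ t, c = l :: t := by
  cases c with
  | nil => simp at h
  | cons a t =>
    simp only [List.head?_cons, Option.some.injEq] at h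
    exact ⟨t, by rw [h]⟩

lemma chain_last_sum {d : ℕ} : ∀ {c : List (List ℕ)} {l Q : List ℕ},
    c.Chain' (coverS d) → c.head? = some l → c.getLast? = some Q →
    Q.sum + 1 = l.sum + c.length := by
  intro c
  induction c with
  | nil => intro l Q _ h; simp at h
  | cons a t ih =>
    intro l Q hch hh hl
    have ha : a = l := by simpa using hh
    subst ha
    match t, hl with
    | [], hl => simp_all
    | b :: t', hl =>
      rw [List.getLast?_cons_cons] at hl
      dsimp only [List.Chain'] at hch
      rw [List.isChain_cons_cons] at hch
      have h1 : b.sum = a.sum + 1 :=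
        sum_of_mem_coversF (d := d) (mem_coversF.2 hch.1)
      have := ih (l := b) hch.2 (by simp) hl
      simp only [List.length_cons] at *
      omega

lemma chain_last_len {d : ℕ} : ∀ {c : List (List ℕ)} {l Q : List ℕ},
    c.Chain' (coverS d) → c.head? = some l → c.getLast? = some Q →
    l.length ≤ Q.length := by
  intro c
  induction c with
  | nil => intro l Q _ h; simp at h
  | cons a t ih =>
    intro l Q hch hh hl
    have ha : a = l := by simpa using hh
    subst ha
    match t, hl with
    | [], hl => simp_all
    | b :: t', hl =>
      rw [List.getLast?_cons_cons] at hl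
      dsimp only [List.Chain'] at hch
      rw [List.isChain_cons_cons] at hch
      have h1 := length_of_mem_coversF (d := d) (mem_coversF.2 hch.1)
      have := ih (l := b) hch.2 (by simp) hl
      omega

def chainPred (d k : ℕ) (l : List ℕ) (n : ℕ) (c : List (List ℕ)) : Prop :=
  c.Chain' (coverS d) ∧ c.head? = some l ∧
      ∃ Q, c.getLast? = some Q ∧ Q.sum = n ∧ Q.length = k

lemma mem_chainsF_base {d k : ℕ} {l : List ℕ} {n : ℕ} {c : List (List ℕ)}
    (hn : n ≤ l.sum) :
    c ∈ chainsF d k l n ↔ chainPred d k l n c := by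
  rw [chainsF, dif_pos hn]
  constructor
  · intro hc
    by_cases hcond : n = l.sum ∧ l.length = k
    · rw [if_pos hcond] at hc
      simp only [Finset.mem_singleton] at hc
      subst hc
      exact ⟨List.isChain_singleton _, by simp, l, by simp, hcond.1.symm, hcond.2⟩
    · rw [if_neg hcond] at hc; simp at hc
  · rintro ⟨hch, hh, Q, hl, hQs, hQl⟩
    have hsum := chain_last_sum hch hh hl
    obtain ⟨t, rfl⟩ := head?_eq hh
    match t with
    | [] =>
      simp only [List.getLast?_singleton, Option.some.injEq] at hl
      subst hl
      rw [if_pos ⟨hQs.symm, hQl⟩]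
      simp
    | b :: t' =>
      exfalso
      simp only [List.length_cons] at hsum
      omega

lemma mem_chainsF {d k : ℕ} {l : List ℕ} {n : ℕ} {c : List (List ℕ)} :
    c ∈ chainsF d k l n ↔ chainPred d k l n c := by
  have H : ∀ m (l : List ℕ) (c : List (List ℕ)), n - l.sum ≤ m →
      (c ∈ chainsF d k l n ↔ chainPred d k l n c) := by
    intro m
    induction m with
    | zero =>
      intro l c hm
      exact mem_chainsF_base (by omega)
    | succ m ih =>
      intro l c hm
      by_cases hn : n ≤ l.sum
      · exact mem_chainsF_base hn
      · rw [chainsF, dif_neg hn]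
        simp only [Finset.mem_biUnion, Finset.mem_attach, Finset.mem_image, true_and,
          Subtype.exists]
        constructor
        · rintro ⟨γ, hγ, c', hc', rfl⟩
          have hsum := sum_of_mem_coversF hγ
          have hpred := (ih γ c' (by omega)).1 hc'
          obtain ⟨hch, hh, Q, hl, hQs, hQl⟩ := hpred
          obtain ⟨t, rfl⟩ := head?_eq hh
          refine ⟨List.isChain_cons_cons.2 ⟨mem_coversF.1 hγ, hch⟩, by simp, Q, ?_, hQs, hQl⟩
          rw [List.getLast?_cons_cons]
          exact hl
        · rintro ⟨hch, hh, Q, hl, hQs, hQl⟩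
          obtain ⟨t, rfl⟩ := head?_eq hh
          match t with
          | [] =>
            simp only [List.getLast?_singleton, Option.some.injEq] at hl
            subst hl
            exact absurd (le_of_eq hQs.symm) hn
          | b :: t' =>
            dsimp only [List.Chain'] at hch
            rw [List.isChain_cons_cons] at hch
            have hγ : b ∈ coversF d l := mem_coversF.2 hch.1
            have hsum := sum_of_mem_coversF hγ
            refine ⟨b, hγ, b :: t', (ih b (b :: t') (by omega)).2 ?_, rfl⟩
            exact ⟨hch.2, by simp, Q, by rwa [List.getLast?_cons_cons] at hl,
              hQs, hQl⟩
  exact H (n - l.sum) l c le_rfl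

lemma chainsF_empty_of_len {d k : ℕ} {l : List ℕ} (h : k < l.length) (n : ℕ) :
    chainsF d k l n = ∅ := by
  rw [Finset.eq_empty_iff_forall_notMem]
  intro c hc
  obtain ⟨hch, hh, Q, hl, hQs, hQl⟩ := mem_chainsF.1 hc
  have := chain_last_len hch hh hl
  omega

lemma card_chainsF_rec {d k : ℕ} {l : List ℕ} {n : ℕ} (h : l.sum < n) :
    (chainsF d k l n).card = ∑ γ ∈ coversF d l, (chainsF d k γ n).card := by
  rw [chainsF, dif_neg (by omega)]
  rw [Finset.card_biUnion]
  · rw [← Finset.sum_attach (coversF d l) (fun γ => (chainsF d k γ n).card)]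
    refine Finset.sum_congr rfl fun γ _ => ?_
    exact Finset.card_image_of_injective _ (fun a b hab => by simpa using hab)
  · intro x _ y _ hxy
    simp only [Finset.disjoint_left, Finset.mem_image]
    rintro c ⟨c₁, hc₁, rfl⟩ ⟨c₂, hc₂, hc⟩
    have hcc : c₂ = c₁ := by simpa using hc
    subst hcc
    have h1 := (mem_chainsF.1 hc₁).2.1
    have h2 := (mem_chainsF.1 hc₂).2.1
    rw [h1] at h2
    exact hxy (Subtype.ext (by simpa using h2))

/-- normalized chain count -/
def G (d k : ℕ) (x : List ℕ) (m : ℕ) : ℕ := (chainsF d k x (x.sum + m)).card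


/-! ### getD evaluation -/

lemma getD_take {l : List ℕ} {i p : ℕ} (h : p < i) : (l.take i).getD p 0 = l.getD p 0 := by
  simp [List.getD_eq_getElem?_getD, List.getElem?_take, h]

lemma getD_drop (l : List ℕ) (i q : ℕ) : (l.drop i).getD q 0 = l.getD (i + q) 0 := by
  simp [List.getD_eq_getElem?_getD, List.getElem?_drop]

lemma getD_append_left {a b : List ℕ} {p : ℕ} (h : p < a.length) :
    (a ++ b).getD p 0 = a.getD p 0 := by
  simp [List.getD_eq_getElem?_getD, List.getElem?_append, h]

lemma getD_append_mid (a b : List ℕ) (x : ℕ) : (a ++ x :: b).getD a.length 0 = x := by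
  rw [List.getD_eq_getElem?_getD, List.getElem?_append_right le_rfl]
  simp

lemma getD_append_right2 {a : List ℕ} (b : List ℕ) (x : ℕ) {p : ℕ} (h : a.length < p) :
    (a ++ x :: b).getD p 0 = b.getD (p - a.length - 1) 0 := by
  rw [List.getD_eq_getElem?_getD, List.getElem?_append_right (by omega)]
  obtain ⟨q, hq⟩ : ∃ q, p - a.length = q + 1 := ⟨p - a.length - 1, by omega⟩
  rw [hq]
  simp [List.getD_eq_getElem?_getD]

lemma length_take_eq {l : List ℕ} {i : ℕ} (h : i ≤ l.length) : (l.take i).length = i := by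
  simp [List.length_take]; omega

lemma gIns_getD_self {l : List ℕ} {i : ℕ} (h : i ≤ l.length) : (gIns l i).getD i 0 = 1 := by
  have := getD_append_mid (l.take i) (l.drop i) 1
  rwa [length_take_eq h] at this

lemma gIns_getD_gt {l : List ℕ} {i p : ℕ} (hi : i ≤ l.length) (h : i < p) :
    (gIns l i).getD p 0 = l.getD (p-1) 0 := by
  rw [gIns, getD_append_right2 _ _ (by rwa [length_take_eq hi]), length_take_eq hi,
    getD_drop]
  congr 1
  omega

lemma gInc_getD_self {l : List ℕ} {j : ℕ} (h : j < l.length) :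
    (gInc l j).getD j 0 = l.getD j 0 + 1 := by
  rw [gInc, List.getD_eq_getElem _ _ (by simpa using h), List.getElem_set_self]

lemma gInc_getD_ne {l : List ℕ} {j p : ℕ} (h : j ≠ p) :
    (gInc l j).getD p 0 = l.getD p 0 := by
  by_cases hp : p < l.length
  · rw [gInc, List.getD_eq_getElem _ _ (by simpa using hp), List.getElem_set_ne h,
      List.getD_eq_getElem _ _ hp]
  · rw [List.getD_eq_default _ _ (by rw [length_gInc]; omega),
      List.getD_eq_default _ _ (by omega)]

lemma gSpl_getD_self {l : List ℕ} {j : ℕ} (h : j < l.length) (s : ℕ) :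
    (gSpl l (j, s)).getD j 0 = l.getD j 0 - s + 1 := by
  have := getD_append_mid (l.take j) (s :: l.drop (j+1)) (l.getD j 0 - s + 1)
  rwa [length_take_eq h.le] at this

lemma gSpl_getD_succ {l : List ℕ} {j : ℕ} (h : j < l.length) (s : ℕ) :
    (gSpl l (j, s)).getD (j+1) 0 = s := by
  rw [gSpl, getD_append_right2 _ _ (by rw [length_take_eq h.le]; omega),
    length_take_eq h.le]
  simp

lemma gSpl_getD_gt {l : List ℕ} {j p : ℕ} (h : j < l.length) (s : ℕ) (hp : j + 1 < p) :
    (gSpl l (j, s)).getD p 0 = l.getD (p-1) 0 := by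
  rw [gSpl, getD_append_right2 _ _ (by rw [length_take_eq h.le]; omega),
    length_take_eq h.le]
  obtain ⟨q, hq⟩ : ∃ q, p - j - 1 = q + 1 := ⟨p - j - 2, by omega⟩
  rw [hq]
  rw [List.getD_cons_succ, getD_drop]
  congr 1
  omega

/-! ### Injectivity on index sets -/

lemma mem_insIdx {l : List ℕ} {i : ℕ} (h : i ∈ insIdx l) :
    i ≤ l.length ∧ (i = 0 ∨ l.getD (i-1) 0 ≠ 1) := by
  simp only [insIdx, Finset.mem_filter, Finset.mem_range] at h
  exact ⟨by omega, h.2⟩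

lemma mem_splIdx {d : ℕ} {l : List ℕ} {p : ℕ × ℕ} (h : p ∈ splIdx d l) :
    p.1 < l.length ∧ 2 ≤ p.2 ∧ p.2 ≤ d - 1 ∧ p.2 + 1 ≤ l.getD p.1 0 := by
  simp only [splIdx, Finset.mem_filter, Finset.mem_product, Finset.mem_range,
    Finset.mem_Icc] at h
  exact ⟨h.1.1, h.1.2.1, h.1.2.2, h.2⟩

lemma gIns_injOn (l : List ℕ) : Set.InjOn (gIns l) (insIdx l : Set ℕ) := by
  have key : ∀ i i' : ℕ, i < i' → i' ∈ insIdx l → gIns l i ≠ gIns l i' := by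
    intro i i' hlt hi' heq
    obtain ⟨hle, hc⟩ := mem_insIdx hi'
    have h1 : (gIns l i).getD i' 0 = l.getD (i'-1) 0 := gIns_getD_gt (by omega) hlt
    have h2 : (gIns l i').getD i' 0 = 1 := gIns_getD_self hle
    rw [heq, h2] at h1
    rcases hc with rfl | hc
    · omega
    · exact hc h1.symm
  intro i hi i' hi' heq
  rcases lt_trichotomy i i' with h | h | h
  · exact absurd heq (key i i' h (by simpa using hi'))
  · exact h
  · exact absurd heq.symm (key i' i h (by simpa using hi))

lemma gInc_injOn (l : List ℕ) : Set.InjOn (gInc l) ((Finset.range l.length) : Set ℕ) := by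
  intro i hi i' hi' heq
  simp only [Finset.coe_range, Set.mem_Iio] at hi hi'
  by_contra hne
  have h1 : (gInc l i).getD i 0 = l.getD i 0 + 1 := gInc_getD_self hi
  have h2 : (gInc l i').getD i 0 = l.getD i 0 := gInc_getD_ne (fun h => hne h.symm)
  rw [heq, h2] at h1
  omega

lemma gSpl_injOn {d : ℕ} (l : List ℕ) : Set.InjOn (gSpl l) ((splIdx d l) : Set (ℕ × ℕ)) := by
  have key : ∀ p p' : ℕ × ℕ, p.1 < p'.1 → p ∈ splIdx d l → p' ∈ splIdx d l →
      gSpl l p ≠ gSpl l p' := by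
    intro ⟨j, s⟩ ⟨j', s'⟩ hlt hp hp' heq
    obtain ⟨hj, _, _, hq⟩ := mem_splIdx hp
    obtain ⟨hj', _, _, hq'⟩ := mem_splIdx hp'
    have h1 : (gSpl l (j, s)).getD (j'+1) 0 = l.getD j' 0 := by
      rw [gSpl_getD_gt hj s (by omega), Nat.add_sub_cancel]
    have h2 : (gSpl l (j', s')).getD (j'+1) 0 = s' := gSpl_getD_succ hj' s'
    rw [heq, h2] at h1
    have hq'2 : s' + 1 ≤ l.getD j' 0 := hq'
    omega
  intro p hp p' hp' heq
  simp only [Finset.mem_coe] at hp hp'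
  rcases lt_trichotomy p.1 p'.1 with h | h | h
  · exact absurd heq (key p p' h hp hp')
  · obtain ⟨hj, _, _, _⟩ := mem_splIdx hp
    have h2 : p.2 = p'.2 := by
      have e1 : (gSpl l p).getD (p.1+1) 0 = p.2 := gSpl_getD_succ hj p.2
      have e2 : (gSpl l p').getD (p'.1+1) 0 = p'.2 := by
        obtain ⟨hj', _, _, _⟩ := mem_splIdx hp'
        exact gSpl_getD_succ hj' p'.2
      rw [heq, h] at e1
      rw [e1] at e2
      exact e2.symm ▸ rfl
    exact Prod.ext h h2
  · exact absurd heq.symm (key p' p h hp' hp)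

/-! ### counts of 1 and disjointness -/

lemma count_gIns (l : List ℕ) (i : ℕ) : (gIns l i).count 1 = l.count 1 + 1 := by
  have h := congrArg (List.count 1) (List.take_append_drop i l)
  rw [List.count_append] at h
  rw [gIns, List.count_append, List.count_cons]
  simp only [beq_self_eq_true, if_true]
  omega

lemma count_gSpl {d : ℕ} {l : List ℕ} {p : ℕ × ℕ} (hp : p ∈ splIdx d l) :
    (gSpl l p).count 1 = l.count 1 := by
  obtain ⟨hj, hs2, _, hq⟩ := mem_splIdx hp
  have h := congrArg (List.count 1) (decomp l hj)
  rw [List.count_append, List.count_cons] at h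
  rw [gSpl, List.count_append, List.count_cons, List.count_cons]
  have e1 : (l.getD p.1 0 - p.2 + 1 == 1) = false := by
    rw [beq_eq_false_iff_ne]; omega
  have e2 : (p.2 == 1) = false := by rw [beq_eq_false_iff_ne]; omega
  have e3 : (l.getD p.1 0 == 1) = false := by rw [beq_eq_false_iff_ne]; omega
  rw [e3] at h
  rw [e1, e2]
  simp only [Bool.false_eq_true, if_false] at h ⊢
  omega

lemma sum_coversF {M : Type*} [AddCommMonoid M] (d : ℕ) (l : List ℕ) (F : List ℕ → M) :
    ∑ γ ∈ coversF d l, F γ = (∑ i ∈ insIdx l, F (gIns l i))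
      + (∑ j ∈ Finset.range l.length, F (gInc l j)) + (∑ p ∈ splIdx d l, F (gSpl l p)) := by
  have hlen_ins : ∀ x ∈ (insIdx l).image (gIns l), x.length = l.length + 1 := by
    rintro x hx
    obtain ⟨i, hi, rfl⟩ := Finset.mem_image.1 hx
    exact length_gIns l (mem_insIdx hi).1
  have hlen_inc : ∀ x ∈ (Finset.range l.length).image (gInc l), x.length = l.length := by
    rintro x hx
    obtain ⟨j, hj, rfl⟩ := Finset.mem_image.1 hx
    exact length_gInc l j
  have hlen_spl : ∀ x ∈ (splIdx d l).image (gSpl l), x.length = l.length + 1 := by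
    rintro x hx
    obtain ⟨p, hp, rfl⟩ := Finset.mem_image.1 hx
    exact length_gSpl l (mem_splIdx hp).1
  have hcnt_ins : ∀ x ∈ (insIdx l).image (gIns l), x.count 1 = l.count 1 + 1 := by
    rintro x hx
    obtain ⟨i, hi, rfl⟩ := Finset.mem_image.1 hx
    exact count_gIns l i
  have hcnt_spl : ∀ x ∈ (splIdx d l).image (gSpl l), x.count 1 = l.count 1 := by
    rintro x hx
    obtain ⟨p, hp, rfl⟩ := Finset.mem_image.1 hx
    exact count_gSpl hp
  have d1 : Disjoint ((insIdx l).image (gIns l)) ((Finset.range l.length).image (gInc l)) := by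
    rw [Finset.disjoint_left]
    intro x h1 h2
    have := hlen_ins x h1
    have := hlen_inc x h2
    omega
  have d2 : Disjoint (((insIdx l).image (gIns l)) ∪ ((Finset.range l.length).image (gInc l)))
      ((splIdx d l).image (gSpl l)) := by
    rw [Finset.disjoint_left]
    intro x h1 h2
    rcases Finset.mem_union.1 h1 with h1 | h1
    · have := hcnt_ins x h1
      have := hcnt_spl x h2
      omega
    · have := hlen_inc x h1
      have := hlen_spl x h2
      omega
  rw [coversF, Finset.sum_union d2, Finset.sum_union d1,
    Finset.sum_image (fun a ha b hb h => gIns_injOn l ha hb h),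
    Finset.sum_image (fun a ha b hb h => gInc_injOn l ha hb h),
    Finset.sum_image (fun a ha b hb h => gSpl_injOn l ha hb h)]


/-! ### Capping -/

def Ncap (d k j : ℕ) : ℕ := d * (k + 1 - j)

def capL (d k : ℕ) (l : List ℕ) : List ℕ := l.map (fun x => min x (Ncap d k l.length))

lemma length_capL (d k : ℕ) (l : List ℕ) : (capL d k l).length = l.length := by
  simp [capL]

lemma getD_capL (d k : ℕ) (l : List ℕ) (i : ℕ) :
    (capL d k l).getD i 0 = min (l.getD i 0) (Ncap d k l.length) := by
  rw [capL, List.getD_eq_getElem?_getD, List.getElem?_map, List.getD_eq_getElem?_getD]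
  cases l[i]? <;> simp

lemma capL_idem (d k : ℕ) (l : List ℕ) : capL d k (capL d k l) = capL d k l := by
  simp only [capL, List.length_map, List.map_map]
  exact List.map_congr_left fun a _ => by simp only [Function.comp_apply]; omega

lemma capL_map_min (d k : ℕ) {l : List ℕ} {N' : ℕ} (h : N' ≤ Ncap d k l.length) :
    (capL d k l).map (fun x => min x N') = l.map (fun x => min x N') := by
  simp only [capL, List.map_map]
  exact List.map_congr_left fun a _ => by simp only [Function.comp_apply]; omega

lemma Ncap_succ_le (d k j : ℕ) : Ncap d k (j+1) ≤ Ncap d k j :=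
  Nat.mul_le_mul_left _ (by omega)

lemma Ncap_succ (d k : ℕ) {j : ℕ} (hj : j ≤ k) : Ncap d k j = Ncap d k (j+1) + d := by
  unfold Ncap
  have h1 : k + 1 - j = (k + 1 - (j+1)) + 1 := by omega
  rw [h1, Nat.mul_succ]

lemma Ncap_ge_d (d k : ℕ) {j : ℕ} (hj : j ≤ k) : d ≤ Ncap d k j := by
  calc d = d * 1 := (Nat.mul_one d).symm
  _ ≤ d * (k + 1 - j) := Nat.mul_le_mul_left _ (by omega)

lemma capIns (d k : ℕ) {l : List ℕ} {i : ℕ} (hi : i ≤ l.length) (hlen : l.length < k)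
    (hd : 1 ≤ d) :
    capL d k (gIns l i) =
      ((capL d k l).map (fun x => min x (Ncap d k (l.length+1)))).take i
        ++ 1 :: ((capL d k l).map (fun x => min x (Ncap d k (l.length+1)))).drop i := by
  rw [capL_map_min d k (Ncap_succ_le d k l.length)]
  rw [capL, length_gIns l hi, gIns, List.map_append, List.map_cons, List.map_take,
    List.map_drop]
  congr 2
  have : 1 ≤ Ncap d k (l.length + 1) := le_trans hd (Ncap_ge_d d k (by omega))
  omega

lemma capInc (d k : ℕ) (l : List ℕ) (j : ℕ) :
    capL d k (gInc l j) =
      (capL d k l).set j (min ((capL d k l).getD j 0 + 1) (Ncap d k l.length)) := by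
  have h1 : capL d k (gInc l j) = (gInc l j).map (fun x => min x (Ncap d k l.length)) := by
    rw [capL, length_gInc]
  rw [h1, gInc, List.map_set, getD_capL]
  congr 1
  omega

lemma capSpl (d k : ℕ) {l : List ℕ} {j s : ℕ} (hj : j < l.length) (hs : 2 ≤ s)
    (hsd : s ≤ d - 1) (hd : 2 ≤ d) (hlen : l.length < k) :
    capL d k (gSpl l (j, s)) =
      ((capL d k l).map (fun x => min x (Ncap d k (l.length+1)))).take j
        ++ (min ((capL d k l).getD j 0 - s + 1) (Ncap d k (l.length+1)))
          :: s :: ((capL d k l).map (fun x => min x (Ncap d k (l.length+1)))).drop (j+1) := by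
  have hNd : d ≤ Ncap d k (l.length + 1) := Ncap_ge_d d k (by omega)
  have hNN : Ncap d k l.length = Ncap d k (l.length + 1) + d := Ncap_succ d k (by omega)
  rw [capL_map_min d k (Ncap_succ_le d k l.length)]
  rw [capL, length_gSpl l hj, gSpl, List.map_append, List.map_cons, List.map_cons,
    List.map_take, List.map_drop, getD_capL]
  dsimp only
  congr 2
  · omega
  · congr 1
    omega

lemma capEnt {d k : ℕ} {l l' : List ℕ} (hlen : l'.length = l.length)
    (hcap : capL d k l = capL d k l') (i : ℕ) :
    min (l.getD i 0) (Ncap d k l.length) = min (l'.getD i 0) (Ncap d k l.length) := by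
  calc min (l.getD i 0) (Ncap d k l.length) = (capL d k l).getD i 0 :=
        (getD_capL d k l i).symm
  _ = (capL d k l').getD i 0 := by rw [hcap]
  _ = min (l'.getD i 0) (Ncap d k l.length) := by rw [getD_capL, hlen]

lemma insIdx_capEq {d k : ℕ} {l l' : List ℕ} (hlen : l'.length = l.length)
    (hcap : capL d k l = capL d k l') (hN : 2 ≤ Ncap d k l.length) :
    insIdx l = insIdx l' := by
  ext i
  simp only [insIdx, Finset.mem_filter, Finset.mem_range, hlen]
  constructor
  · rintro ⟨h1, h2 | h2⟩
    · exact ⟨h1, Or.inl h2⟩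
    · refine ⟨h1, Or.inr fun hc => h2 ?_⟩
      have := capEnt hlen hcap (i-1)
      omega
  · rintro ⟨h1, h2 | h2⟩
    · exact ⟨h1, Or.inl h2⟩
    · refine ⟨h1, Or.inr fun hc => h2 ?_⟩
      have := capEnt hlen hcap (i-1)
      omega

lemma splIdx_capEq {d k : ℕ} {l l' : List ℕ} (hlen : l'.length = l.length)
    (hcap : capL d k l = capL d k l') (hNd : d ≤ Ncap d k l.length) :
    splIdx d l = splIdx d l' := by
  ext p
  simp only [splIdx, Finset.mem_filter, Finset.mem_product, Finset.mem_range,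
    Finset.mem_Icc, hlen]
  have := capEnt hlen hcap p.1
  constructor
  · rintro ⟨⟨h1, h2, h3⟩, h4⟩
    exact ⟨⟨h1, h2, h3⟩, by omega⟩
  · rintro ⟨⟨h1, h2, h3⟩, h4⟩
    exact ⟨⟨h1, h2, h3⟩, by omega⟩

lemma G_zero (d k : ℕ) (l : List ℕ) : G d k l 0 = if l.length = k then 1 else 0 := by
  rw [G, Nat.add_zero, chainsF, dif_pos le_rfl]
  by_cases h : l.length = k <;> simp [h]

lemma G_zero_of_len {d k : ℕ} {l : List ℕ} (h : k < l.length) (m : ℕ) : G d k l m = 0 := by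
  rw [G, chainsF_empty_of_len h]
  rfl

lemma G_rec (d k : ℕ) (l : List ℕ) (m : ℕ) :
    G d k l (m+1) = ∑ γ ∈ coversF d l, G d k γ m := by
  rw [G, card_chainsF_rec (by omega)]
  refine Finset.sum_congr rfl fun γ hγ => ?_
  rw [G, sum_of_mem_coversF hγ]
  have h2 : l.sum + (m+1) = l.sum + 1 + m := by omega
  rw [h2]

lemma G_capEq {d k : ℕ} (hd : 2 ≤ d) : ∀ m (l l' : List ℕ), l.length ≤ k →
    l'.length = l.length → capL d k l = capL d k l' → G d k l m = G d k l' m := by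
  intro m
  induction m with
  | zero => intro l l' _ h2 _; rw [G_zero, G_zero, h2]
  | succ m ih =>
    intro l l' hlk hlen hcap
    have hNd : d ≤ Ncap d k l.length := Ncap_ge_d d k (by omega)
    rw [G_rec, G_rec, sum_coversF, sum_coversF]
    have hins : (∑ i ∈ insIdx l, G d k (gIns l i) m)
        = ∑ i ∈ insIdx l', G d k (gIns l' i) m := by
      rw [← insIdx_capEq hlen hcap (by omega)]
      refine Finset.sum_congr rfl fun i hi => ?_
      have hi' : i ≤ l.length := (mem_insIdx hi).1
      by_cases hk : l.length < k
      · refine ih (gIns l i) (gIns l' i) ?_ ?_ ?_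
        · rw [length_gIns l hi']; omega
        · rw [length_gIns l hi', length_gIns l' (by omega)]; omega
        · rw [capIns d k hi' hk (by omega), capIns d k (by omega : i ≤ l'.length)
            (by omega) (by omega), hcap, hlen]
      · rw [G_zero_of_len (by rw [length_gIns l hi']; omega),
          G_zero_of_len (by rw [length_gIns l' (by omega)]; omega)]
    have hinc : (∑ j ∈ Finset.range l.length, G d k (gInc l j) m)
        = ∑ j ∈ Finset.range l'.length, G d k (gInc l' j) m := by
      rw [hlen]
      refine Finset.sum_congr rfl fun j hj => ?_
      refine ih (gInc l j) (gInc l' j) (by rw [length_gInc]; omega)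
        (by rw [length_gInc, length_gInc]; omega) ?_
      rw [capInc, capInc, hcap, hlen]
    have hspl : (∑ p ∈ splIdx d l, G d k (gSpl l p) m)
        = ∑ p ∈ splIdx d l', G d k (gSpl l' p) m := by
      rw [← splIdx_capEq hlen hcap hNd]
      refine Finset.sum_congr rfl fun p hp => ?_
      obtain ⟨hj, hs2, hsd, hq⟩ := mem_splIdx hp
      by_cases hk : l.length < k
      · refine ih (gSpl l p) (gSpl l' p) ?_ ?_ ?_
        · rw [length_gSpl l hj]; omega
        · rw [length_gSpl l hj, length_gSpl l' (by omega)]; omega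
        · have e1 := capSpl d k hj hs2 hsd hd hk
          have e2 := capSpl d k (show p.1 < l'.length by omega) hs2 hsd hd
            (show l'.length < k by omega)
          rw [e1, e2, hcap, hlen]
      · rw [G_zero_of_len (by rw [length_gSpl l hj]; omega),
          G_zero_of_len (by rw [length_gSpl l' (by omega)]; omega)]
    rw [hins, hinc, hspl]


/-! ### Power series -/

noncomputable def gser (d k : ℕ) (s : List ℕ) : PowerSeries ℤ :=
  PowerSeries.mk fun m => (G d k s m : ℤ)

def mS (d k : ℕ) (s : List ℕ) : ℕ :=
  ((coversF d s).filter (fun γ => capL d k γ = s)).card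

def Tset (d k : ℕ) (s : List ℕ) : Finset (List ℕ) :=
  (coversF d s).filter (fun γ => ¬ capL d k γ = s)

lemma G_succ_split {d k : ℕ} (hd : 2 ≤ d) {s : List ℕ} (hsk : s.length ≤ k) (m : ℕ) :
    G d k s (m+1) = mS d k s * G d k s m + ∑ γ ∈ Tset d k s, G d k (capL d k γ) m := by
  rw [G_rec]
  have hterm : ∀ γ ∈ coversF d s, G d k γ m = G d k (capL d k γ) m := by
    intro γ _
    rcases le_or_gt γ.length k with h | h
    · exact G_capEq hd m γ (capL d k γ) h (length_capL d k γ) (capL_idem d k γ).symm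
    · rw [G_zero_of_len h, G_zero_of_len (by rw [length_capL]; omega)]
  rw [Finset.sum_congr rfl hterm,
    ← Finset.sum_filter_add_sum_filter_not (coversF d s) (fun γ => capL d k γ = s)]
  congr 1
  rw [Finset.sum_congr rfl (fun γ hγ => by
      rw [(Finset.mem_filter.1 hγ).2] : ∀ γ ∈ _, G d k (capL d k γ) m = G d k s m),
    Finset.sum_const, smul_eq_mul, mS]

lemma gser_zero_of_len {d k : ℕ} {t : List ℕ} (h : k < t.length) : gser d k t = 0 := by
  ext n
  simp [gser, G_zero_of_len h]

noncomputable def Qfac (i : ℕ) : PowerSeries ℤ := 1 - (i : PowerSeries ℤ) * PowerSeries.X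

lemma gser_eq {d k : ℕ} (hd : 2 ≤ d) {s : List ℕ} (hsk : s.length ≤ k) :
    gser d k s = (PowerSeries.C (R := ℤ)) (if s.length = k then 1 else 0)
      + PowerSeries.X * (((mS d k s : ℕ) : PowerSeries ℤ) * gser d k s
          + ∑ γ ∈ Tset d k s, gser d k (capL d k γ)) := by
  have hcast : ((mS d k s : ℕ) : PowerSeries ℤ)
      = PowerSeries.C (R := ℤ) ((mS d k s : ℕ) : ℤ) := by
    rw [map_natCast (PowerSeries.C (R := ℤ))]
  ext n
  cases n with
  | zero =>
    rw [gser, PowerSeries.coeff_mk, G_zero, map_add, PowerSeries.coeff_C,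
      mul_comm PowerSeries.X _, PowerSeries.coeff_zero_mul_X]
    split_ifs <;> simp_all
  | succ m =>
    rw [gser, PowerSeries.coeff_mk, map_add, PowerSeries.coeff_C,
      PowerSeries.coeff_succ_X_mul, map_add, hcast, PowerSeries.coeff_C_mul, map_sum]
    simp only [gser, PowerSeries.coeff_mk]
    rw [G_succ_split hd hsk m]
    push_cast
    simp

lemma gser_key {d k : ℕ} (hd : 2 ≤ d) {s : List ℕ} (hsk : s.length ≤ k) :
    Qfac (mS d k s) * gser d k s = (PowerSeries.C (R := ℤ)) (if s.length = k then 1 else 0)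
      + PowerSeries.X * ∑ γ ∈ Tset d k s, gser d k (capL d k γ) := by
  have h := gser_eq hd hsk
  rw [Qfac]
  linear_combination h

/-! ### Structure of covers keeping length -/

lemma eq_gInc_of_len {d : ℕ} {s γ : List ℕ} (hγ : γ ∈ coversF d s)
    (hlen : γ.length = s.length) : ∃ j, j < s.length ∧ γ = gInc s j := by
  simp only [coversF, Finset.mem_union, Finset.mem_image] at hγ
  rcases hγ with (⟨i, hi, rfl⟩ | ⟨j, hj, rfl⟩) | ⟨p, hp, rfl⟩
  · rw [length_gIns s (mem_insIdx hi).1] at hlen; omega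
  · exact ⟨j, by simpa using hj, rfl⟩
  · rw [length_gSpl s (mem_splIdx hp).1] at hlen; omega

lemma mS_le (d k : ℕ) (s : List ℕ) : mS d k s ≤ s.length := by
  have hsub : (coversF d s).filter (fun γ => capL d k γ = s)
      ⊆ (Finset.range s.length).image (gInc s) := by
    intro γ hγ
    obtain ⟨h1, h2⟩ := Finset.mem_filter.1 hγ
    have hlen : γ.length = s.length := by
      have := congrArg List.length h2
      rwa [length_capL] at this
    obtain ⟨j, hj, rfl⟩ := eq_gInc_of_len h1 hlen
    exact Finset.mem_image.2 ⟨j, Finset.mem_range.2 hj, rfl⟩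
  calc mS d k s ≤ ((Finset.range s.length).image (gInc s)).card := Finset.card_le_card hsub
  _ ≤ (Finset.range s.length).card := Finset.card_image_le
  _ = s.length := Finset.card_range _

lemma set_getD_self {l : List ℕ} {j : ℕ} (hj : j < l.length) :
    l.set j (l.getD j 0) = l := by
  rw [set_eq l hj, decomp l hj]

lemma top_case {d k : ℕ} {s : List ℕ} (hm : mS d k s = k) (hsk : s.length ≤ k) :
    ∀ γ ∈ Tset d k s, k < γ.length := by
  have hlen : s.length = k := le_antisymm hsk (by have := mS_le d k s; omega)
  have hsub : (coversF d s).filter (fun γ => capL d k γ = s)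
      ⊆ (Finset.range s.length).image (gInc s) := by
    intro γ hγ
    obtain ⟨h1, h2⟩ := Finset.mem_filter.1 hγ
    have hl : γ.length = s.length := by
      have := congrArg List.length h2
      rwa [length_capL] at this
    obtain ⟨j, hj, rfl⟩ := eq_gInc_of_len h1 hl
    exact Finset.mem_image.2 ⟨j, Finset.mem_range.2 hj, rfl⟩
  have heq := Finset.eq_of_subset_of_card_le hsub (by
    calc ((Finset.range s.length).image (gInc s)).card ≤ s.length := by
          refine le_trans Finset.card_image_le ?_
          simp
    _ = mS d k s := by rw [mS] at *; omega)
  intro γ hγ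
  obtain ⟨h1, h2⟩ := Finset.mem_filter.1 hγ
  by_contra hc
  push_neg at hc
  rcases length_of_mem_coversF h1 with hL | hL
  · obtain ⟨j, hj, rfl⟩ := eq_gInc_of_len h1 hL
    have : gInc s j ∈ (Finset.range s.length).image (gInc s) :=
      Finset.mem_image.2 ⟨j, Finset.mem_range.2 hj, rfl⟩
    rw [← heq] at this
    exact h2 (Finset.mem_filter.1 this).2
  · omega

/-! ### rank -/

def rank (d k : ℕ) (s : List ℕ) : ℕ :=
  (k + 1 - s.length) * ((k+1) * (d*(k+1)) + 1)
    + (s.map (fun x => Ncap d k s.length - x)).sum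

lemma sum_map_set (f : ℕ → ℕ) {l : List ℕ} {j : ℕ} (hj : j < l.length) (v : ℕ) :
    ((l.set j v).map f).sum + f (l.getD j 0) = (l.map f).sum + f v := by
  rw [set_eq l hj v]
  conv_rhs => rw [← decomp l hj]
  simp only [List.map_append, List.map_cons, List.sum_append, List.sum_cons]
  omega

lemma capped_entry_le {d k : ℕ} {s : List ℕ} (hcap : capL d k s = s) (j : ℕ) :
    s.getD j 0 ≤ Ncap d k s.length ∨ s.getD j 0 = 0 := by
  have := congrArg (fun t => t.getD j 0) hcap
  simp only [getD_capL] at this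
  omega

lemma rank_lt {d k : ℕ} (hd : 2 ≤ d) {s γ : List ℕ} (hcap : capL d k s = s)
    (hsk : s.length ≤ k) (hγ : γ ∈ Tset d k s) (hγk : γ.length ≤ k) :
    rank d k (capL d k γ) < rank d k s := by
  obtain ⟨hγc, hne⟩ := Finset.mem_filter.1 hγ
  rcases length_of_mem_coversF hγc with hL | hL
  · -- length preserved: an increase at an uncapped position
    obtain ⟨j, hj, rfl⟩ := eq_gInc_of_len hγc hL
    have hsj : s.getD j 0 ≤ Ncap d k s.length := by
      have := congrArg (fun t => t.getD j 0) hcap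
      simp only [getD_capL] at this
      omega
    have hlt : s.getD j 0 < Ncap d k s.length := by
      rcases lt_or_eq_of_le hsj with h | h
      · exact h
      · exfalso
        apply hne
        rw [capInc, hcap]
        have : min (s.getD j 0 + 1) (Ncap d k s.length) = s.getD j 0 := by omega
        rw [this, set_getD_self hj]
    have hc : capL d k (gInc s j) = s.set j (s.getD j 0 + 1) := by
      rw [capInc, hcap]
      congr 1
      omega
    rw [hc, rank, rank]
    have hlenset : (s.set j (s.getD j 0 + 1)).length = s.length := by simp
    rw [hlenset]
    refine Nat.add_lt_add_left ?_ _
    have hkey := sum_map_set (fun x => Ncap d k s.length - x) hj (s.getD j 0 + 1)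
    omega
  · -- length increased
    have hlc : (capL d k γ).length = s.length + 1 := by rw [length_capL]; omega
    rw [rank, rank, hlc]
    have hbound : ((capL d k γ).map
        (fun x => Ncap d k (s.length+1) - x)).sum ≤ (s.length+1) * (d*(k+1)) := by
      have h1 : ∀ x ∈ (capL d k γ).map (fun x => Ncap d k (s.length+1) - x),
          x ≤ d * (k+1) := by
        intro x hx
        obtain ⟨a, _, rfl⟩ := List.mem_map.1 hx
        calc Ncap d k (s.length+1) - a ≤ Ncap d k (s.length+1) := by omega
        _ ≤ d * (k+1) := by rw [Ncap]; exact Nat.mul_le_mul_left _ (by omega)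
      calc ((capL d k γ).map (fun x => Ncap d k (s.length+1) - x)).sum
          ≤ ((capL d k γ).map (fun x => Ncap d k (s.length+1) - x)).length
            • (d * (k+1)) := List.sum_le_card_nsmul _ _ h1
      _ = (s.length+1) * (d*(k+1)) := by
          rw [smul_eq_mul, List.length_map, length_capL, hL]
    calc (k + 1 - (s.length+1)) * ((k+1) * (d*(k+1)) + 1)
          + ((capL d k γ).map (fun x => Ncap d k (s.length+1) - x)).sum
        < (k + 1 - (s.length+1)) * ((k+1) * (d*(k+1)) + 1) + ((k+1) * (d*(k+1)) + 1) := by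
          have hW : (s.length+1) * (d*(k+1)) < (k+1) * (d*(k+1)) + 1 :=
            Nat.lt_succ_of_le (Nat.mul_le_mul_right _ (by omega))
          omega
    _ = (k + 1 - s.length) * ((k+1) * (d*(k+1)) + 1) := by
          rw [← Nat.succ_mul]
          congr 1
          omega
    _ ≤ (k + 1 - s.length) * ((k+1) * (d*(k+1)) + 1)
          + (s.map (fun x => Ncap d k s.length - x)).sum := Nat.le_add_right _ _

/-! ### the subring of polynomials -/

noncomputable def Rng : Subring (PowerSeries ℤ) := (Polynomial.coeToPowerSeries.ringHom (R := ℤ)).range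

lemma X_mem_Rng : (PowerSeries.X : PowerSeries ℤ) ∈ Rng :=
  ⟨Polynomial.X, by rw [Polynomial.coeToPowerSeries.ringHom_apply, Polynomial.coe_X]⟩

lemma C_mem_Rng (z : ℤ) : (PowerSeries.C (R := ℤ)) z ∈ Rng :=
  ⟨Polynomial.C z, by rw [Polynomial.coeToPowerSeries.ringHom_apply, Polynomial.coe_C]⟩

lemma Qfac_mem_Rng (i : ℕ) : Qfac i ∈ Rng := by
  rw [Qfac]
  exact Subring.sub_mem _ (Subring.one_mem _)
    (Subring.mul_mem _ (natCast_mem _ i) X_mem_Rng)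

noncomputable def Qprod (k : ℕ) (c : ℕ → ℕ) : PowerSeries ℤ :=
  ∏ i ∈ Finset.Icc 1 k, Qfac i ^ c i

lemma Qprod_mem_Rng (k : ℕ) (c : ℕ → ℕ) : Qprod k c ∈ Rng :=
  prod_mem fun i _ => pow_mem (Qfac_mem_Rng i) _

lemma Qprod_split {k : ℕ} {c1 c2 : ℕ → ℕ} (h : ∀ i ∈ Finset.Icc 1 k, c1 i ≤ c2 i) :
    Qprod k c2 = Qprod k c1 * Qprod k (fun i => c2 i - c1 i) := by
  rw [Qprod, Qprod, Qprod, ← Finset.prod_mul_distrib]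
  refine Finset.prod_congr rfl fun i hi => ?_
  rw [← pow_add]
  congr 1
  have := h i hi
  omega

/-! ### main induction -/

lemma Cmain {d k : ℕ} (hd : 2 ≤ d) : ∀ (R : ℕ) (s : List ℕ), rank d k s ≤ R →
    capL d k s = s → s.length ≤ k →
    ∃ c : ℕ → ℕ, c k = 1 ∧ gser d k s * Qprod k c ∈ Rng := by
  intro R
  induction R using Nat.strong_induction_on with
  | _ R ih =>
    intro s hR hcap hsk
    have hbr : ∀ γ ∈ Tset d k s, ∃ c : ℕ → ℕ, c k = 1 ∧
        gser d k (capL d k γ) * Qprod k c ∈ Rng := by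
      intro γ hγ
      rcases le_or_gt γ.length k with h | h
      · have hlt := rank_lt hd hcap hsk hγ h
        exact ih (rank d k (capL d k γ)) (by omega) _ le_rfl (capL_idem d k γ)
          (by rw [length_capL]; omega)
      · refine ⟨fun i => if i = k then 1 else 0, by simp, ?_⟩
        rw [gser_zero_of_len (by rw [length_capL]; omega), zero_mul]
        exact Subring.zero_mem _
    choose! cc hcc using hbr
    by_cases hm : mS d k s = k
    · -- top case
      have hlen : s.length = k := le_antisymm hsk (by have := mS_le d k s; omega)
      have hz : ∑ γ ∈ Tset d k s, gser d k (capL d k γ) = 0 :=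
        Finset.sum_eq_zero fun γ hγ =>
          gser_zero_of_len (by rw [length_capL]; exact top_case hm hsk γ hγ)
      have key := gser_key hd hsk
      rw [hm, hz, mul_zero, add_zero, if_pos hlen] at key
      refine ⟨fun i => if i = k then 1 else 0, by simp, ?_⟩
      have hQ : Qprod k (fun i => if i = k then 1 else 0) = Qfac k := by
        rw [Qprod, Finset.prod_eq_single k]
        · simp
        · intro i _ hne
          simp [hne]
        · intro hk
          have hk0 : k = 0 := by
            simp only [Finset.mem_Icc] at hk
            omega
          subst hk0
          simp [Qfac]
      rw [hQ, mul_comm, key]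
      exact C_mem_Rng 1
    · -- main case
      have hmlt : mS d k s < k :=
        lt_of_le_of_ne (le_trans (mS_le d k s) hsk) hm
      set c'' : ℕ → ℕ := fun i => if i = k then 1 else (Tset d k s).sup (fun γ => cc γ i)
        with hc''def
      have hccle : ∀ γ ∈ Tset d k s, ∀ i ∈ Finset.Icc 1 k, cc γ i ≤ c'' i := by
        intro γ hγ i _
        by_cases hik : i = k
        · subst hik
          rw [(hcc γ hγ).1, hc''def]
          simp
        · rw [hc''def]
          simp only [if_neg hik]
          exact Finset.le_sup (f := fun γ => cc γ i) hγ
      set c : ℕ → ℕ := fun i => if i = mS d k s then c'' i + 1 else c'' i with hcdef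
      have hck : c k = 1 := by
        rw [hcdef]
        simp only [if_neg (by omega : ¬ k = mS d k s), hc''def, if_pos rfl]
      have hQc : Qprod k c = Qfac (mS d k s) * Qprod k c'' := by
        rcases Nat.eq_zero_or_pos (mS d k s) with h0 | h0
        · rw [h0]
          have : Qfac 0 = 1 := by simp [Qfac]
          rw [this, one_mul]
          refine Finset.prod_congr rfl fun i hi => ?_
          have hi1 : 1 ≤ i := (Finset.mem_Icc.1 hi).1
          rw [hcdef]
          simp only [if_neg (by omega : ¬ i = mS d k s)]
        · have hmem : mS d k s ∈ Finset.Icc 1 k := Finset.mem_Icc.2 ⟨h0, by omega⟩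
          rw [Qprod, Qprod]
          have hterm : ∀ i ∈ Finset.Icc 1 k,
              Qfac i ^ c i = Qfac i ^ c'' i * (if i = mS d k s then Qfac i else 1) := by
            intro i _
            by_cases hi : i = mS d k s
            · rw [hcdef]
              simp only [if_pos hi, pow_succ]
            · rw [hcdef]
              simp only [if_neg hi, mul_one]
          rw [Finset.prod_congr rfl hterm, Finset.prod_mul_distrib,
            Finset.prod_ite_eq' (Finset.Icc 1 k) (mS d k s) (fun i => Qfac i),
            if_pos hmem, mul_comm]
      refine ⟨c, hck, ?_⟩
      rw [hQc, show gser d k s * (Qfac (mS d k s) * Qprod k c'')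
        = (Qfac (mS d k s) * gser d k s) * Qprod k c'' from by ring,
        gser_key hd hsk, add_mul]
      refine Subring.add_mem _
        (Subring.mul_mem _ (C_mem_Rng _) (Qprod_mem_Rng k c'')) ?_
      rw [Finset.mul_sum, Finset.sum_mul]
      refine sum_mem fun γ hγ => ?_
      have hmemγ := (hcc γ hγ).2
      have hstep : PowerSeries.X * gser d k (capL d k γ) * Qprod k c''
          = PowerSeries.X * ((gser d k (capL d k γ) * Qprod k (cc γ))
              * Qprod k (fun i => c'' i - cc γ i)) := by
        rw [Qprod_split (hccle γ hγ)]
        ring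
      rw [hstep]
      exact Subring.mul_mem _ X_mem_Rng (Subring.mul_mem _ hmemγ (Qprod_mem_Rng _ _))


/-! ### monotonicity and positivity -/

lemma card_mono {d k : ℕ} (hk : 1 ≤ k) (α : List ℕ) (n : ℕ) :
    k * (chainsF d k α n).card ≤ (chainsF d k α (n+1)).card := by
  classical
  set f : ℕ × List (List ℕ) → List (List ℕ) :=
    fun q => q.2 ++ [gInc (q.2.getLast?.getD []) q.1] with hf
  have hmaps : ∀ q ∈ (Finset.range k) ×ˢ (chainsF d k α n), f q ∈ chainsF d k α (n+1) := by
    rintro ⟨i, c⟩ hq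
    rw [Finset.mem_product, Finset.mem_range] at hq
    obtain ⟨hik, hc⟩ := hq
    obtain ⟨hch, hh, Q, hl, hQs, hQl⟩ := mem_chainsF.1 hc
    have hQD : c.getLast?.getD [] = Q := by rw [hl]; rfl
    refine mem_chainsF.2 ⟨?_, ?_, gInc Q i, ?_, ?_, ?_⟩
    · rw [hf]
      simp only [hQD]
      dsimp only [List.Chain']
      rw [List.isChain_append]
      refine ⟨hch, by simp, ?_⟩
      intro x hx y hy
      rw [hl] at hx
      simp only [Option.mem_def, Option.some.injEq] at hx
      simp only [List.head?_cons, Option.mem_def, Option.some.injEq] at hy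
      subst hx; subst hy
      exact Or.inr (Or.inl ⟨i, by omega, rfl⟩)
    · obtain ⟨t, rfl⟩ := head?_eq hh
      simp [hf]
    · rw [hf]
      simp only [hQD]
      exact List.getLast?_concat
    · rw [sum_gInc Q (by omega)]
      omega
    · rw [length_gInc]
      exact hQl
  have hinj : Set.InjOn f ((Finset.range k) ×ˢ (chainsF d k α n) : Finset _) := by
    rintro ⟨i, c⟩ hq ⟨i', c'⟩ hq' heq
    simp only [Finset.mem_coe, Finset.mem_product, Finset.mem_range] at hq hq'
    obtain ⟨hik, hc⟩ := hq
    obtain ⟨hik', hc'⟩ := hq'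
    obtain ⟨hch, hh, Q, hl, hQs, hQl⟩ := mem_chainsF.1 hc
    obtain ⟨hch', hh', Q', hl', hQs', hQl'⟩ := mem_chainsF.1 hc'
    have hlen : c.length = c'.length := by
      have e1 := chain_last_sum hch hh hl
      have e2 := chain_last_sum hch' hh' hl'
      omega
    simp only [hf] at heq
    obtain ⟨hcc, hxx⟩ := List.append_inj heq hlen
    have hQD : c.getLast?.getD [] = Q := by rw [hl]; rfl
    subst hcc
    rw [hl'] at hl
    simp only [Option.some.injEq] at hl
    subst hl
    rw [hQD] at hxx
    simp only [List.cons.injEq, and_true] at hxx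
    have hii : i = i' := by
      refine gInc_injOn _ ?_ ?_ hxx
      · simp only [Finset.coe_range, Set.mem_Iio]; omega
      · simp only [Finset.coe_range, Set.mem_Iio]; omega
    rw [hii]
  calc k * (chainsF d k α n).card = ((Finset.range k) ×ˢ (chainsF d k α n)).card := by
        rw [Finset.card_product, Finset.card_range]
  _ ≤ (chainsF d k α (n+1)).card := Finset.card_le_card_of_injOn f hmaps hinj


lemma card_pos {d k : ℕ} (α : List ℕ) (hαk : α.length ≤ k) :
    1 ≤ (chainsF d k α (α.sum + (k - α.length))).card := by
  set q := k - α.length with hq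
  set c : List (List ℕ) := (List.range (q+1)).map (fun t => List.replicate t 1 ++ α)
    with hc
  have hmem : c ∈ chainsF d k α (α.sum + q) := by
    refine mem_chainsF.2 ⟨?_, ?_, List.replicate q 1 ++ α, ?_, ?_, ?_⟩
    · dsimp only [List.Chain']
      rw [hc, List.isChain_map]
      rw [show q + 1 = Nat.succ q from rfl, List.isChain_range_succ]
      intro m _
      refine Or.inl ⟨0, by omega, ?_⟩
      simp [List.replicate_succ]
    · rw [hc, show q + 1 = Nat.succ q from rfl, List.range_succ_eq_map]
      simp
    · rw [hc, show q + 1 = Nat.succ q from rfl, List.range_succ, List.map_append]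
      simp
    · rw [List.sum_append, List.sum_replicate]
      simp [add_comm]
    · rw [List.length_append, List.length_replicate]
      omega
  exact Finset.card_pos.2 ⟨c, hmem⟩

/-! ### coefficient bounds -/

def Bnd (k : ℕ) (F : PowerSeries ℤ) : Prop :=
  ∃ C M : ℕ, ∀ n, |PowerSeries.coeff (R := ℤ) n F| ≤ (C : ℤ) * (n+1)^M * ((k:ℤ)-1)^n

lemma bnd_poly {k : ℕ} (hk : 2 ≤ k) (p : Polynomial ℤ) : Bnd k ((p : PowerSeries ℤ)) := by
  refine ⟨(Finset.range (p.natDegree + 1)).sum (fun i => (p.coeff i).natAbs), 0, fun n => ?_⟩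
  rw [Polynomial.coeff_coe, pow_zero, mul_one]
  have hK : (1:ℤ) ≤ ((k:ℤ)-1)^n := one_le_pow₀ (by push_cast; omega)
  have hcast : (((Finset.range (p.natDegree + 1)).sum (fun i => (p.coeff i).natAbs) : ℕ) : ℤ)
      = ∑ i ∈ Finset.range (p.natDegree + 1), |p.coeff i| := by
    push_cast
    rfl
  have hb : |p.coeff n| ≤ ∑ i ∈ Finset.range (p.natDegree + 1), |p.coeff i| := by
    rcases le_or_gt n p.natDegree with h | h
    · exact Finset.single_le_sum (f := fun i => |p.coeff i|) (fun i _ => abs_nonneg _)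
        (Finset.mem_range.2 (by omega))
    · rw [p.coeff_eq_zero_of_natDegree_lt h, abs_zero]
      exact Finset.sum_nonneg fun i _ => abs_nonneg _
  calc |p.coeff n| ≤ ∑ i ∈ Finset.range (p.natDegree + 1), |p.coeff i| := hb
  _ = (((Finset.range (p.natDegree + 1)).sum (fun i => (p.coeff i).natAbs) : ℕ) : ℤ) :=
      hcast.symm
  _ ≤ _ := le_mul_of_one_le_right (by positivity) hK

lemma bnd_peel {k : ℕ} (hk : 2 ≤ k) {i : ℕ} (hik : i ≤ k-1) {B F : PowerSeries ℤ}
    (hBF : B * Qfac i = F) (hF : Bnd k F) : Bnd k B := by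
  obtain ⟨C, M, hC⟩ := hF
  have hFeq : ∀ n, PowerSeries.coeff (R := ℤ) (n+1) F
      = PowerSeries.coeff (R := ℤ) (n+1) B - i * PowerSeries.coeff (R := ℤ) n B := by
    intro n
    have h1 : F = B - (PowerSeries.C (R := ℤ) (i:ℤ)) * (B * PowerSeries.X ^ 1) := by
      rw [← hBF, Qfac, map_natCast (PowerSeries.C (R := ℤ))]
      ring
    rw [h1, map_sub, PowerSeries.coeff_C_mul, PowerSeries.coeff_mul_X_pow',
      if_pos (by omega : 1 ≤ n + 1)]
    norm_num
  have hF0 : PowerSeries.coeff (R := ℤ) 0 F = PowerSeries.coeff (R := ℤ) 0 B := by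
    have h1 : F = B - (PowerSeries.C (R := ℤ) (i:ℤ)) * (B * PowerSeries.X ^ 1) := by
      rw [← hBF, Qfac, map_natCast (PowerSeries.C (R := ℤ))]
      ring
    rw [h1, map_sub, PowerSeries.coeff_C_mul, PowerSeries.coeff_mul_X_pow']
    norm_num
  have hrec : ∀ n, PowerSeries.coeff (R := ℤ) n B
      = ∑ j ∈ Finset.range (n+1), PowerSeries.coeff (R := ℤ) j F * (i:ℤ)^(n-j) := by
    intro n
    induction n with
    | zero => simp [hF0]
    | succ n ihn =>
      have := hFeq n
      have hstep : PowerSeries.coeff (R := ℤ) (n+1) B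
          = PowerSeries.coeff (R := ℤ) (n+1) F + i * PowerSeries.coeff (R := ℤ) n B := by omega
      have h4 : ∀ j ∈ Finset.range (n+1),
          (i:ℤ) * (PowerSeries.coeff (R := ℤ) j F * (i:ℤ)^(n-j))
            = PowerSeries.coeff (R := ℤ) j F * (i:ℤ)^(n+1-j) := by
        intro j hj
        simp only [Finset.mem_range] at hj
        rw [show n+1-j = (n-j)+1 by omega, pow_succ]
        ring
      rw [hstep, ihn, Finset.mul_sum]
      conv_rhs => rw [Finset.sum_range_succ]
      rw [Finset.sum_congr rfl h4, Nat.sub_self, pow_zero, mul_one]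
      ring
  refine ⟨C, M+1, fun n => ?_⟩
  rw [hrec n]
  have hterm : ∀ j ∈ Finset.range (n+1),
      |PowerSeries.coeff (R := ℤ) j F * (i:ℤ)^(n-j)| ≤ (C:ℤ) * (n+1)^M * ((k:ℤ)-1)^n := by
    intro j hj
    simp only [Finset.mem_range] at hj
    rw [abs_mul, abs_pow]
    have h2 : |(i:ℤ)| ^ (n-j) ≤ ((k:ℤ)-1)^(n-j) := by
      refine pow_le_pow_left₀ (by positivity) ?_ _
      rw [abs_of_nonneg (by positivity)]
      push_cast
      omega
    have h3 : ((j:ℤ)+1)^M ≤ ((n:ℤ)+1)^M := by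
      refine pow_le_pow_left₀ (by positivity) (by push_cast; omega) _
    have hKnn : (0:ℤ) ≤ (k:ℤ) - 1 := by push_cast; omega
    calc |PowerSeries.coeff (R := ℤ) j F| * |(i:ℤ)| ^ (n-j)
        ≤ ((C:ℤ) * (j+1)^M * ((k:ℤ)-1)^j) * ((k:ℤ)-1)^(n-j) := by
          refine mul_le_mul (hC j) h2 (by positivity) ?_
          exact mul_nonneg (mul_nonneg (by positivity) (by positivity))
            (pow_nonneg hKnn _)
    _ = (C:ℤ) * (j+1)^M * (((k:ℤ)-1)^j * ((k:ℤ)-1)^(n-j)) := by ring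
    _ = (C:ℤ) * (j+1)^M * ((k:ℤ)-1)^n := by
          rw [← pow_add]
          congr 2
          omega
    _ ≤ (C:ℤ) * (n+1)^M * ((k:ℤ)-1)^n := by
          refine mul_le_mul_of_nonneg_right ?_ (pow_nonneg hKnn _)
          exact mul_le_mul_of_nonneg_left h3 (by positivity)
  calc |∑ j ∈ Finset.range (n+1), PowerSeries.coeff (R := ℤ) j F * (i:ℤ)^(n-j)|
      ≤ ∑ j ∈ Finset.range (n+1), |PowerSeries.coeff (R := ℤ) j F * (i:ℤ)^(n-j)| :=
        Finset.abs_sum_le_sum_abs _ _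
  _ ≤ ∑ _j ∈ Finset.range (n+1), (C:ℤ) * (n+1)^M * ((k:ℤ)-1)^n :=
        Finset.sum_le_sum hterm
  _ = ((n:ℤ)+1) * ((C:ℤ) * (n+1)^M * ((k:ℤ)-1)^n) := by
        rw [Finset.sum_const, Finset.card_range]
        push_cast
        ring
  _ = (C:ℤ) * (n+1)^(M+1) * ((k:ℤ)-1)^n := by ring

lemma bnd_peel_pow {k : ℕ} (hk : 2 ≤ k) {i : ℕ} (hik : i ≤ k-1) :
    ∀ (e : ℕ) (B F : PowerSeries ℤ), B * Qfac i ^ e = F → Bnd k F → Bnd k B := by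
  intro e
  induction e with
  | zero => intro B F h hF; rw [pow_zero, mul_one] at h; rwa [h]
  | succ e ihe =>
    intro B F h hF
    have h2 : (B * Qfac i) * Qfac i ^ e = F := by rw [← h]; ring
    exact bnd_peel hk hik rfl (ihe (B * Qfac i) F h2 hF)

lemma bnd_prod_peel {k : ℕ} (hk : 2 ≤ k) (S : Finset ℕ) (hS : ∀ i ∈ S, i ≤ k - 1) :
    ∀ (c : ℕ → ℕ) (B F : PowerSeries ℤ),
      B * (∏ i ∈ S, Qfac i ^ c i) = F → Bnd k F → Bnd k B := by
  classical
  induction S using Finset.induction_on with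
  | empty => intro c B F h hF; rw [Finset.prod_empty, mul_one] at h; rwa [h]
  | insert _ _ hna =>
    rename_i a S ihS
    intro c B F h hF
    rw [Finset.prod_insert hna] at h
    have h2 : (B * ∏ i ∈ S, Qfac i ^ c i) * Qfac a ^ c a = F := by rw [← h]; ring
    have h3 : Bnd k (B * ∏ i ∈ S, Qfac i ^ c i) :=
      bnd_peel_pow hk (hS a (Finset.mem_insert_self a S)) (c a) _ F h2 hF
    exact ihS (fun i hi => hS i (Finset.mem_insert_of_mem hi)) c B _ rfl h3

/-! ### glue -/

lemma ank_eq_card (d k : ℕ) (α : List ℕ) (n : ℕ) :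
    ank (coverS d) α n k = (chainsF d k α n).card := by
  rw [ank]
  have e : {c : List (List ℕ) // c.Chain' (coverS d) ∧ c.head? = some α ∧
      ∃ Q, c.getLast? = some Q ∧ Q.sum = n ∧ Q.length = k}
      ≃ {c : List (List ℕ) // c ∈ chainsF d k α n} :=
    Equiv.subtypeEquivRight (fun c => Iff.symm (mem_chainsF (c := c)))
  rw [Nat.card_congr e, Nat.card_eq_fintype_card, Fintype.card_coe]

lemma Lser_eq {d k : ℕ} (hd : 2 ≤ d) (α : List ℕ) (hαk : α.length ≤ k) :
    Lser (coverS d) α k = PowerSeries.X ^ α.sum * gser d k (capL d k α) := by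
  ext n
  rw [Lser, PowerSeries.coeff_mk, mul_comm, PowerSeries.coeff_mul_X_pow']
  by_cases hn : α.sum ≤ n
  · rw [if_pos hn, ank_eq_card, gser, PowerSeries.coeff_mk]
    have h1 : G d k α (n - α.sum) = G d k (capL d k α) (n - α.sum) :=
      G_capEq hd _ α (capL d k α) hαk (length_capL d k α) (capL_idem d k α).symm
    rw [← h1, G]
    have h2 : α.sum + (n - α.sum) = n := by omega
    rw [h2]
  · rw [if_neg hn, ank_eq_card]
    have hempty : chainsF d k α n = ∅ := by
      rw [chainsF, dif_pos (by omega : n ≤ α.sum), if_neg (by omega : ¬(n = α.sum ∧ α.length = k))]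
    rw [hempty]
    simp

lemma part1 {d k : ℕ} (hd : 2 ≤ d) (α : List ℕ) (hαk : α.length ≤ k) :
    ∃ c : ℕ → ℕ, c k = 1 ∧ ∃ p : Polynomial ℤ,
      Lser (coverS d) α k *
          ∏ i ∈ Finset.Icc 1 k, (1 - (i : PowerSeries ℤ) * PowerSeries.X) ^ c i =
        (p : PowerSeries ℤ) := by
  obtain ⟨c, hck, hmem⟩ := Cmain hd (rank d k (capL d k α)) (capL d k α) le_rfl
    (capL_idem d k α) (by rw [length_capL]; exact hαk)
  obtain ⟨p0, hp0⟩ := hmem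
  rw [Polynomial.coeToPowerSeries.ringHom_apply] at hp0
  refine ⟨c, hck, Polynomial.X ^ α.sum * p0, ?_⟩
  have hQ : (∏ i ∈ Finset.Icc 1 k, (1 - (i : PowerSeries ℤ) * PowerSeries.X) ^ c i)
      = Qprod k c := rfl
  rw [hQ, Lser_eq hd α hαk, mul_assoc, ← hp0]
  push_cast [Polynomial.coe_mul, Polynomial.coe_pow, Polynomial.coe_X]
  ring

lemma part2 {d k : ℕ} (hd : 2 ≤ d) (α : List ℕ) (hαk : α.length ≤ k) (hk1 : 1 ≤ k) :
    ∃ C : ℝ, 0 < C ∧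
      Filter.Tendsto (fun n => (ank (coverS d) α n k : ℝ) / (k : ℝ) ^ n)
        Filter.atTop (nhds C) := by
  obtain ⟨c, hck, p, hLQ⟩ := part1 hd α hαk
  rw [show (∏ i ∈ Finset.Icc 1 k, (1 - (i : PowerSeries ℤ) * PowerSeries.X) ^ c i)
    = Qprod k c from rfl] at hLQ
  set a : ℕ → ℕ := fun n => (chainsF d k α n).card with ha
  have hank : ∀ n, ank (coverS d) α n k = a n := fun n => ank_eq_card d k α n
  have hmono : ∀ n, k * a n ≤ a (n+1) := fun n => card_mono hk1 α n
  set B : PowerSeries ℤ := Lser (coverS d) α k * Qfac k with hB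
  have hsplit : Finset.Icc 1 k = insert k (Finset.Icc 1 (k-1)) := by
    ext x
    simp only [Finset.mem_Icc, Finset.mem_insert]
    omega
  have hkn : k ∉ Finset.Icc 1 (k-1) := by
    simp only [Finset.mem_Icc]
    omega
  have hQsplit : Qprod k c = Qfac k * ∏ i ∈ Finset.Icc 1 (k-1), Qfac i ^ c i := by
    rw [Qprod, hsplit, Finset.prod_insert hkn, hck, pow_one]
  have hBQ : B * (∏ i ∈ Finset.Icc 1 (k-1), Qfac i ^ c i) = (p : PowerSeries ℤ) := by
    calc B * (∏ i ∈ Finset.Icc 1 (k-1), Qfac i ^ c i)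
        = Lser (coverS d) α k * Qprod k c := by rw [hQsplit, hB]; ring
    _ = (p : PowerSeries ℤ) := hLQ
  have hBco : ∀ n, PowerSeries.coeff (R := ℤ) (n+1) B = ((a (n+1) : ℤ)) - k * (a n : ℤ) := by
    intro n
    have h1 : B = Lser (coverS d) α k
        - (PowerSeries.C (R := ℤ) (k:ℤ)) * (Lser (coverS d) α k * PowerSeries.X ^ 1) := by
      rw [hB, Qfac, map_natCast (PowerSeries.C (R := ℤ))]
      ring
    rw [h1, map_sub, PowerSeries.coeff_C_mul, PowerSeries.coeff_mul_X_pow',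
      if_pos (by omega : 1 ≤ n+1)]
    simp only [Lser, PowerSeries.coeff_mk, Nat.add_sub_cancel, hank]
  set u : ℕ → ℝ := fun n => (a n : ℝ) / (k:ℝ)^n with hu
  set v : ℕ → ℝ := fun n => ((a (n+1) : ℝ) - k * (a n : ℝ)) / (k:ℝ)^(n+1) with hv
  have hkR : (0:ℝ) < (k:ℝ) := by exact_mod_cast hk1
  have hvnn : ∀ n, 0 ≤ v n := by
    intro n
    rw [hv]
    have h1 : (k:ℝ) * (a n : ℝ) ≤ (a (n+1) : ℝ) := by exact_mod_cast hmono n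
    have h2 : (0:ℝ) < (k:ℝ)^(n+1) := by positivity
    exact div_nonneg (by linarith) h2.le
  have htel : ∀ n, u (n+1) = u n + v n := by
    intro n
    rw [hu, hv]
    have h2 : ((k:ℝ))^(n+1) ≠ 0 := by positivity
    field_simp
    ring
  have hupartial : ∀ n, u n = u 0 + ∑ i ∈ Finset.range n, v i := by
    intro n
    induction n with
    | zero => simp
    | succ n ihn => rw [htel n, ihn, Finset.sum_range_succ]; ring
  have hsum : Summable v := by
    by_cases hk2 : 2 ≤ k
    · have hBnd : Bnd k B := bnd_prod_peel hk2 (Finset.Icc 1 (k-1))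
        (fun i hi => (Finset.mem_Icc.1 hi).2) c B _ hBQ (bnd_poly hk2 p)
      obtain ⟨C, M, hC⟩ := hBnd
      have hKnnR : (0:ℝ) ≤ (k:ℝ) - 1 := by
        have : (1:ℝ) ≤ (k:ℝ) := by exact_mod_cast hk1
        linarith
      have hρnn : (0:ℝ) ≤ ((k:ℝ)-1)/(k:ℝ) := div_nonneg hKnnR hkR.le
      have hρlt : ‖((k:ℝ)-1)/(k:ℝ)‖ < 1 := by
        rw [Real.norm_eq_abs, abs_of_nonneg hρnn, div_lt_one hkR]
        linarith
      have hsg : Summable (fun n : ℕ => ((n:ℝ))^M * (((k:ℝ)-1)/(k:ℝ))^n) :=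
        summable_pow_mul_geometric_of_norm_lt_one M hρlt
      have hsg1 : Summable (fun n : ℕ => (((n:ℝ)+1))^M * (((k:ℝ)-1)/(k:ℝ))^(n+1)) := by
        have h5 := (summable_nat_add_iff
          (f := fun n : ℕ => ((n:ℝ))^M * (((k:ℝ)-1)/(k:ℝ))^n) 1).2 hsg
        refine h5.congr (fun n => ?_)
        push_cast
        ring
      have hsg2 : Summable (fun n : ℕ =>
          (C:ℝ) * 2^M * ((((n:ℝ)+1))^M * (((k:ℝ)-1)/(k:ℝ))^(n+1))) := hsg1.mul_left _
      refine Summable.of_nonneg_of_le hvnn (fun n => ?_) hsg2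
      have hc1 := hC (n+1)
      rw [hBco n] at hc1
      have h4 : ((a (n+1) : ℤ) - k * (a n : ℤ))
          ≤ (C:ℤ) * ((↑(n+1):ℤ)+1)^M * ((k:ℤ)-1)^(n+1) := le_trans (le_abs_self _) hc1
      have hb1 : ((a (n+1) : ℝ) - k * (a n : ℝ))
          ≤ (C:ℝ) * ((n:ℝ)+2)^M * ((k:ℝ)-1)^(n+1) := by
        calc ((a (n+1) : ℝ) - k * (a n : ℝ))
            = (((a (n+1) : ℤ) - k * (a n : ℤ) : ℤ) : ℝ) := by push_cast; ring
        _ ≤ (((C:ℤ) * ((↑(n+1):ℤ)+1)^M * ((k:ℤ)-1)^(n+1) : ℤ) : ℝ) := by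
            exact_mod_cast h4
        _ = (C:ℝ) * ((n:ℝ)+2)^M * ((k:ℝ)-1)^(n+1) := by push_cast; ring
      rw [hv]
      show ((a (n+1) : ℝ) - k * (a n : ℝ)) / (k:ℝ)^(n+1) ≤ _
      calc ((a (n+1) : ℝ) - k * (a n : ℝ)) / (k:ℝ)^(n+1)
          ≤ ((C:ℝ) * ((n:ℝ)+2)^M * ((k:ℝ)-1)^(n+1)) / (k:ℝ)^(n+1) :=
            (div_le_div_iff_of_pos_right (by positivity)).2 hb1
      _ = (C:ℝ) * ((n:ℝ)+2)^M * (((k:ℝ)-1)/(k:ℝ))^(n+1) := by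
            rw [div_pow]
            ring
      _ ≤ (C:ℝ) * 2^M * ((((n:ℝ)+1))^M * (((k:ℝ)-1)/(k:ℝ))^(n+1)) := by
            have hp2 : ((n:ℝ)+2)^M ≤ (2*((n:ℝ)+1))^M :=
              pow_le_pow_left₀ (by positivity) (by linarith) M
            have h6 : (C:ℝ) * ((n:ℝ)+2)^M * (((k:ℝ)-1)/(k:ℝ))^(n+1)
                ≤ (C:ℝ) * (2*((n:ℝ)+1))^M * (((k:ℝ)-1)/(k:ℝ))^(n+1) := by
              refine mul_le_mul_of_nonneg_right ?_ (by positivity)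
              exact mul_le_mul_of_nonneg_left hp2 (by positivity)
            calc (C:ℝ) * ((n:ℝ)+2)^M * (((k:ℝ)-1)/(k:ℝ))^(n+1)
                ≤ (C:ℝ) * (2*((n:ℝ)+1))^M * (((k:ℝ)-1)/(k:ℝ))^(n+1) := h6
            _ = (C:ℝ) * 2^M * ((((n:ℝ)+1))^M * (((k:ℝ)-1)/(k:ℝ))^(n+1)) := by
                rw [mul_pow]
                ring
    · have hk1' : k = 1 := by omega
      have hIcc : Finset.Icc 1 (k-1) = ∅ := by
        rw [hk1']
        rfl
      rw [hIcc, Finset.prod_empty, mul_one] at hBQ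
      refine summable_of_ne_finset_zero (s := Finset.range (p.natDegree + 1))
        (fun n hn => ?_)
      simp only [Finset.mem_range, not_lt] at hn
      rw [hv]
      have hz : PowerSeries.coeff (R := ℤ) (n+1) B = 0 := by
        rw [hBQ, Polynomial.coeff_coe]
        exact p.coeff_eq_zero_of_natDegree_lt (by omega)
      rw [hBco n] at hz
      have hz2 : (a (n+1) : ℝ) - k * (a n : ℝ) = 0 := by exact_mod_cast hz
      show ((a (n+1) : ℝ) - k * (a n : ℝ)) / (k:ℝ)^(n+1) = 0
      rw [hz2, zero_div]
  have hT : Filter.Tendsto u Filter.atTop (nhds (u 0 + ∑' n, v n)) := by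
    have h1 := hsum.hasSum.tendsto_sum_nat
    have h2 := Filter.Tendsto.add
      (tendsto_const_nhds (x := u 0) (f := (Filter.atTop : Filter ℕ))) h1
    exact h2.congr (fun n => (hupartial n).symm)
  have humono : Monotone u := monotone_nat_of_le_succ (fun n => by
    rw [htel n]
    linarith [hvnn n])
  have hpos : 1 ≤ a (α.sum + (k - α.length)) := card_pos α hαk
  have hun₁ : 0 < u (α.sum + (k - α.length)) := by
    rw [hu]
    have h7 : (1:ℝ) ≤ (a (α.sum + (k - α.length)) : ℝ) := by exact_mod_cast hpos
    have h8 : (0:ℝ) < (k:ℝ)^(α.sum + (k - α.length)) := by positivity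
    exact div_pos (by linarith) h8
  have hCge : u (α.sum + (k - α.length)) ≤ u 0 + ∑' n, v n :=
    ge_of_tendsto hT (Filter.eventually_atTop.2
      ⟨α.sum + (k - α.length), fun m hm => humono hm⟩)
  refine ⟨u 0 + ∑' n, v n, lt_of_lt_of_le hun₁ hCge, ?_⟩
  refine hT.congr (fun n => ?_)
  rw [hu]
  simp only [hank n]

end S18

open PowerSeries in
theorem stmt18 (d : ℕ) (hd : 2 ≤ d) (α : List ℕ) (hα : IsComposition α) (r : ℕ)
    (hr : α.length = r) (k : ℕ) (hk : r ≤ k) (hk1 : 1 ≤ k) :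
    (∃ c : ℕ → ℕ, c k = 1 ∧ ∃ p : Polynomial ℤ,
      Lser (coverS d) α k *
          ∏ i ∈ Finset.Icc 1 k, (1 - (i : PowerSeries ℤ) * X) ^ c i =
        (p : PowerSeries ℤ)) ∧
    (∃ C : ℝ, 0 < C ∧
      Filter.Tendsto (fun n => (ank (coverS d) α n k : ℝ) / (k : ℝ) ^ n)
        Filter.atTop (nhds C)) := by
  have hαk : α.length ≤ k := by omega
  exact ⟨S18.part1 hd α hαk, S18.part2 hd α hαk hk1⟩
end

section
/- Let α be a composition of n and let π be a permutation of {1,…,n} whose descent set equals S_α = {α_1, α_1+α_2, …, α_1+⋯+α_{r−1}}. For each of the n+1 positions at which a new letter 0 can be inserted into the one-line representation of π, let τ be the resulting word on {0,1,…,n} and let β(τ) be the composition of n+1 corresponding under the bijection β ↦ S_β to the descent set of τ. Then the set of compositions β(τ) obtained from the n+1 insertions is exactly the set of compositions that cover α in the poset 𝔖^∞. -/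
/-- Covering relation of the poset 𝔖^∞: insert a part 1 at any position,
increase one part by 1, or replace a part `q` by the two adjacent parts
`(q − s + 1, s)` for some `s ≥ 2` with `q − s + 1 ≥ 2`. -/
def coverSInf (P Q : List ℕ) : Prop :=
  (∃ i, i ≤ P.length ∧ Q = P.take i ++ 1 :: P.drop i) ∨
  (∃ j, j < P.length ∧ Q = P.set j (P.getD j 0 + 1)) ∨
  (∃ j, j < P.length ∧ ∃ s, 2 ≤ s ∧ 2 ≤ P.getD j 0 - s + 1 ∧
    Q = P.take j ++ (P.getD j 0 - s + 1) :: s :: P.drop (j + 1))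

/-- The subset `S_α = {α_1, α_1+α_2, …, α_1+⋯+α_{r−1}}` of `{1,…,n−1}` associated
to a composition `α = (α_1,…,α_r)` of `n`. -/
def Sset (α : List ℕ) : Set ℕ :=
  {s | ∃ t, 1 ≤ t ∧ t < α.length ∧ s = (α.take t).sum}

/-- The descent set of a word `w_1 w_2 ⋯ w_m` of distinct integers:
`{i : w_i > w_{i+1}}` (positions are 1-based). -/
def descentSet (w : List ℕ) : Set ℕ :=
  {i | 1 ≤ i ∧ i < w.length ∧ w.getD i 0 < w.getD (i - 1) 0}

/-- the composition obtained by inserting 0 at position i of a word with descent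
set given by the composition -/
def fIns : List ℕ → ℕ → List ℕ
  | [], _ => [1]
  | a :: t, i => if i = 0 then (a+1) :: t else if i < a then i :: (a+1-i) :: t else a :: fIns t (i - a)

def shiftIns (D : Set ℕ) (i : ℕ) : Set ℕ :=
  {k | (k < i ∧ k ∈ D) ∨ (k = i ∧ 1 ≤ i) ∨ (i + 1 < k ∧ k - 1 ∈ D)}

lemma fIns_ne_nil (α : List ℕ) (i : ℕ) : fIns α i ≠ [] := by
  cases α with
  | nil => simp [fIns]
  | cons a t =>
    unfold fIns
    split
    · simp
    · split <;> simp

lemma Sset_nil : Sset [] = ∅ := by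
  ext s; simp [Sset]

lemma Sset_cons (a : ℕ) (l : List ℕ) :
    Sset (a :: l) = {s | (s = a ∧ l ≠ []) ∨ ∃ u ∈ Sset l, s = a + u} := by
  ext s
  simp only [Sset, Set.mem_setOf_eq, List.length_cons]
  constructor
  · rintro ⟨t, ht1, ht2, rfl⟩
    obtain ⟨u, rfl⟩ : ∃ u, t = u + 1 := ⟨t - 1, by omega⟩
    rw [List.take_succ_cons]
    rcases Nat.eq_zero_or_pos u with rfl | hu
    · left
      constructor
      · simp
      · intro h; subst h; simp at ht2
    · right
      exact ⟨(l.take u).sum, ⟨u, hu, by omega, rfl⟩, by simp⟩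
  · rintro (⟨rfl, hl⟩ | ⟨u, ⟨v, hv1, hv2, rfl⟩, rfl⟩)
    · exact ⟨1, le_refl _, by cases l with
        | nil => simp at hl
        | cons b u => simp, by simp⟩
    · exact ⟨v + 1, by omega, by omega, by rw [List.take_succ_cons]; simp⟩

lemma Sset_pos {l : List ℕ} (hl : IsComposition l) {s : ℕ} (hs : s ∈ Sset l) : 1 ≤ s := by
  obtain ⟨t, ht1, ht2, rfl⟩ := hs
  cases l with
  | nil => simp at ht2
  | cons c t' =>
    obtain ⟨u, rfl⟩ : ∃ u, t = u + 1 := ⟨t - 1, by omega⟩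
    rw [List.take_succ_cons, List.sum_cons]
    have := hl c (List.mem_cons_self : c ∈ c :: t')
    omega

lemma fIns_sum (α : List ℕ) (i : ℕ) (hi : i ≤ α.sum) : (fIns α i).sum = α.sum + 1 := by
  induction α generalizing i with
  | nil => simp [fIns]
  | cons a t ih =>
    unfold fIns
    split
    · simp; omega
    · split
      · simp; omega
      · rename_i h1 h2
        simp only [List.sum_cons] at hi ⊢
        rw [ih (i - a) (by omega)]
        omega

lemma fIns_comp (α : List ℕ) (hα : IsComposition α) (i : ℕ) : IsComposition (fIns α i) := by
  induction α generalizing i with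
  | nil => intro x hx; simp [fIns] at hx; omega
  | cons a t ih =>
    have ha := hα a (List.mem_cons_self : a ∈ a :: t)
    have ht : IsComposition t := fun x hx => hα x (List.mem_cons_of_mem a hx)
    unfold fIns
    split
    · intro x hx; simp at hx; rcases hx with rfl | hx
      · omega
      · exact ht x hx
    · split
      · rename_i h1 h2
        intro x hx; simp at hx; rcases hx with rfl | rfl | hx
        · omega
        · omega
        · exact ht x hx
      · intro x hx; simp at hx; rcases hx with rfl | hx
        · omega
        · exact ih ht _ x hx

lemma fIns_Sset : ∀ (α : List ℕ), IsComposition α → ∀ i ≤ α.sum,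
    Sset (fIns α i) = shiftIns (Sset α) i := by
  intro α hα
  induction α with
  | nil =>
    intro i hi
    simp only [List.sum_nil, Nat.le_zero] at hi
    subst hi
    ext k
    simp [fIns, Sset_cons, Sset_nil, shiftIns]
  | cons a t ih =>
    intro i hi
    have ha := hα a (List.mem_cons_self : a ∈ a :: t)
    have ht : IsComposition t := fun x hx => hα x (List.mem_cons_of_mem a hx)
    have hpos : ∀ v ∈ Sset t, 1 ≤ v := fun v hv => Sset_pos ht hv
    simp only [List.sum_cons] at hi
    by_cases h0 : i = 0
    · subst h0
      rw [show fIns (a :: t) 0 = (a + 1) :: t from by simp [fIns]]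
      ext k
      simp only [Sset_cons, Set.mem_setOf_eq, shiftIns]
      constructor
      · rintro (⟨rfl, hne⟩ | ⟨u, hu, rfl⟩)
        · exact Or.inr (Or.inr ⟨by omega, Or.inl ⟨by omega, hne⟩⟩)
        · have := hpos u hu
          exact Or.inr (Or.inr ⟨by omega, Or.inr ⟨u, hu, by omega⟩⟩)
      · rintro (⟨h, -⟩ | ⟨-, h⟩ | ⟨hk, ⟨he, hne⟩ | ⟨u, hu, he⟩⟩)
        · omega
        · omega
        · exact Or.inl ⟨by omega, hne⟩
        · exact Or.inr ⟨u, hu, by omega⟩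
    · by_cases hia : i < a
      · rw [show fIns (a :: t) i = i :: (a + 1 - i) :: t from by simp [fIns, h0, hia]]
        ext k
        simp only [Sset_cons, Set.mem_setOf_eq, shiftIns]
        constructor
        · rintro (⟨rfl, -⟩ | ⟨u, (⟨rfl, hne⟩ | ⟨v, hv, rfl⟩), rfl⟩)
          · exact Or.inr (Or.inl ⟨rfl, by omega⟩)
          · exact Or.inr (Or.inr ⟨by omega, Or.inl ⟨by omega, hne⟩⟩)
          · have := hpos v hv
            exact Or.inr (Or.inr ⟨by omega, Or.inr ⟨v, hv, by omega⟩⟩)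
        · rintro (⟨hk, ⟨rfl, hne⟩ | ⟨v, hv, rfl⟩⟩ | ⟨rfl, -⟩ | ⟨hk, ⟨he, hne⟩ | ⟨v, hv, he⟩⟩)
          · omega
          · have := hpos v hv; omega
          · exact Or.inl ⟨rfl, by simp⟩
          · exact Or.inr ⟨a + 1 - i, Or.inl ⟨rfl, hne⟩, by omega⟩
          · have := hpos v hv
            exact Or.inr ⟨a + 1 - i + v, Or.inr ⟨v, hv, rfl⟩, by omega⟩
      · rw [show fIns (a :: t) i = a :: fIns t (i - a) from by simp [fIns, h0, hia]]
        have hne' := fIns_ne_nil t (i - a)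
        have hrec := ih ht (i - a) (by omega)
        have hne2 : t.sum ≠ 0 → t ≠ [] := by rintro h rfl; simp at h
        ext k
        simp only [Sset_cons, Set.mem_setOf_eq, shiftIns, hrec]
        constructor
        · rintro (⟨hka, -⟩ | ⟨u, (⟨hu1, hu2⟩ | ⟨hu1, hu2⟩ | ⟨hu1, hu2⟩), rfl⟩)
          · rcases eq_or_lt_of_le (show a ≤ i by omega) with heq | hlt
            · exact Or.inr (Or.inl ⟨by omega, by omega⟩)
            · exact Or.inl ⟨by omega, Or.inl ⟨hka, hne2 (by omega)⟩⟩
          · exact Or.inl ⟨by omega, Or.inr ⟨u, hu2, rfl⟩⟩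
          · exact Or.inr (Or.inl ⟨by omega, by omega⟩)
          · exact Or.inr (Or.inr ⟨by omega, Or.inr ⟨u - 1, hu2, by omega⟩⟩)
        · rintro (⟨hk, ⟨hka, hne⟩ | ⟨v, hv, rfl⟩⟩ | ⟨hki, hi1⟩ | ⟨hk, ⟨he, hne⟩ | ⟨v, hv, he⟩⟩)
          · exact Or.inl ⟨hka, hne'⟩
          · have := hpos v hv
            exact Or.inr ⟨v, Or.inl ⟨by omega, hv⟩, rfl⟩
          · rcases eq_or_lt_of_le (show a ≤ i by omega) with heq | hlt
            · exact Or.inl ⟨by omega, hne'⟩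
            · exact Or.inr ⟨i - a, Or.inr (Or.inl ⟨rfl, by omega⟩), by omega⟩
          · omega
          · have := hpos v hv
            refine Or.inr ⟨v + 1, Or.inr (Or.inr ⟨by omega, by simpa using hv⟩), by omega⟩

lemma fIns_cons_ge (a : ℕ) (t : List ℕ) (i : ℕ) (ha : 1 ≤ a) (hi : a ≤ i) :
    fIns (a :: t) i = a :: fIns t (i - a) := by
  have h0 : ¬ i = 0 := by omega
  have h2 : ¬ i < a := by omega
  simp [fIns, h0, h2]

lemma coverSInf_cons (a : ℕ) {t Q : List ℕ} (h : coverSInf t Q) :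
    coverSInf (a :: t) (a :: Q) := by
  rcases h with ⟨i, hi, rfl⟩ | ⟨j, hj, rfl⟩ | ⟨j, hj, s, hs1, hs2, rfl⟩
  · exact Or.inl ⟨i + 1, by simpa using hi, by simp⟩
  · exact Or.inr (Or.inl ⟨j + 1, by simpa using hj, by simp⟩)
  · exact Or.inr (Or.inr ⟨j + 1, by simpa using hj, s, hs1, by simpa using hs2, by simp⟩)

lemma fIns_cover : ∀ (α : List ℕ), IsComposition α → ∀ i ≤ α.sum, coverSInf α (fIns α i) := by
  intro α hα
  induction α with
  | nil =>
    intro i hi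
    simp only [List.sum_nil, Nat.le_zero] at hi
    subst hi
    exact Or.inl ⟨0, by simp, by simp [fIns]⟩
  | cons a t ih =>
    intro i hi
    have ha := hα a (List.mem_cons_self : a ∈ a :: t)
    have ht : IsComposition t := fun x hx => hα x (List.mem_cons_of_mem a hx)
    simp only [List.sum_cons] at hi
    by_cases h0 : i = 0
    · subst h0
      exact Or.inr (Or.inl ⟨0, by simp, by simp [fIns]⟩)
    · by_cases hia : i < a
      · by_cases h1 : i = 1
        · subst h1
          refine Or.inl ⟨0, by simp, ?_⟩
          simp [fIns, h0, hia]
        · refine Or.inr (Or.inr ⟨0, by simp, a + 1 - i, by omega, by simp; omega, ?_⟩)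
          have e1 : a - (a + 1 - i) + 1 = i := by omega
          simp only [List.take_zero, List.nil_append, List.getD_cons_zero, List.drop_one,
            List.drop_succ_cons, List.drop_zero, e1]
          simp [fIns, h0, hia]
      · rw [fIns_cons_ge a t i ha (by omega)]
        exact coverSInf_cons a (ih ht (i - a) (by omega))

lemma fIns_insert1 : ∀ (α : List ℕ), IsComposition α → ∀ j,
    ∃ i ≤ α.sum, fIns α i = α.take j ++ 1 :: α.drop j := by
  intro α hα
  induction α with
  | nil => intro j; exact ⟨0, le_refl _, by simp [fIns]⟩
  | cons a t ih =>
    intro j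
    have ha := hα a (List.mem_cons_self : a ∈ a :: t)
    have ht : IsComposition t := fun x hx => hα x (List.mem_cons_of_mem a hx)
    cases j with
    | zero =>
      by_cases h1 : a = 1
      · subst h1
        obtain ⟨i', hi', he⟩ := ih ht 0
        refine ⟨1 + i', by simp; omega, ?_⟩
        rw [fIns_cons_ge 1 t (1 + i') (le_refl _) (by omega)]
        rw [show 1 + i' - 1 = i' from by omega, he]
        simp
      · refine ⟨1, by simp; omega, ?_⟩
        have h0 : (1 : ℕ) ≠ 0 := by omega
        have hia : 1 < a := by omega
        simp [fIns, h0, hia]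
    | succ j' =>
      obtain ⟨i', hi', he⟩ := ih ht j'
      refine ⟨a + i', by simp; omega, ?_⟩
      rw [fIns_cons_ge a t (a + i') ha (by omega),
        show a + i' - a = i' from by omega, he]
      simp

lemma fIns_incr : ∀ (α : List ℕ), IsComposition α → ∀ j < α.length,
    ∃ i ≤ α.sum, fIns α i = α.set j (α.getD j 0 + 1) := by
  intro α hα
  induction α with
  | nil => intro j hj; simp at hj
  | cons a t ih =>
    intro j hj
    have ha := hα a (List.mem_cons_self : a ∈ a :: t)
    have ht : IsComposition t := fun x hx => hα x (List.mem_cons_of_mem a hx)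
    cases j with
    | zero => exact ⟨0, by simp, by simp [fIns]⟩
    | succ j' =>
      obtain ⟨i', hi', he⟩ := ih ht j' (by simpa using hj)
      refine ⟨a + i', by simp; omega, ?_⟩
      rw [fIns_cons_ge a t (a + i') ha (by omega),
        show a + i' - a = i' from by omega, he]
      simp

lemma fIns_split : ∀ (α : List ℕ), IsComposition α → ∀ j < α.length, ∀ s, 2 ≤ s →
    2 ≤ α.getD j 0 - s + 1 →
    ∃ i ≤ α.sum, fIns α i = α.take j ++ (α.getD j 0 - s + 1) :: s :: α.drop (j + 1) := by
  intro α hα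
  induction α with
  | nil => intro j hj; simp at hj
  | cons a t ih =>
    intro j hj s hs1 hs2
    have ha := hα a (List.mem_cons_self : a ∈ a :: t)
    have ht : IsComposition t := fun x hx => hα x (List.mem_cons_of_mem a hx)
    cases j with
    | zero =>
      simp only [List.getD_cons_zero] at hs2 ⊢
      refine ⟨a - s + 1, by simp; omega, ?_⟩
      have h0 : ¬ (a - s + 1 = 0) := by omega
      have hia : a - s + 1 < a := by omega
      have e1 : a + 1 - (a - s + 1) = s := by omega
      simp [fIns, h0, hia, e1]
    | succ j' =>
      simp only [List.getD_cons_succ] at hs2 ⊢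
      obtain ⟨i', hi', he⟩ := ih ht j' (by simpa using hj) s hs1 hs2
      refine ⟨a + i', by simp; omega, ?_⟩
      rw [fIns_cons_ge a t (a + i') ha (by omega),
        show a + i' - a = i' from by omega, he]
      simp

lemma cover_to_fIns (α : List ℕ) (hα : IsComposition α) (Q : List ℕ) (h : coverSInf α Q) :
    ∃ i ≤ α.sum, fIns α i = Q := by
  rcases h with ⟨j, hj, rfl⟩ | ⟨j, hj, rfl⟩ | ⟨j, hj, s, hs1, hs2, rfl⟩
  · exact fIns_insert1 α hα j
  · exact fIns_incr α hα j hj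
  · exact fIns_split α hα j hj s hs1 hs2

lemma comp_sum_zero {l : List ℕ} (hl : IsComposition l) (h : l.sum = 0) : l = [] := by
  cases l with
  | nil => rfl
  | cons a t =>
    have := hl a (List.mem_cons_self : a ∈ a :: t)
    simp at h
    omega

lemma Sset_inj : ∀ (l₁ : List ℕ), IsComposition l₁ → ∀ l₂, IsComposition l₂ →
    l₁.sum = l₂.sum → Sset l₁ = Sset l₂ → l₁ = l₂ := by
  intro l₁
  induction l₁ with
  | nil =>
    intro _ l₂ h2 hsum _
    exact (comp_sum_zero h2 hsum.symm).symm
  | cons a t ih =>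
    intro h1 l₂ h2 hsum hS
    have ha := h1 a (List.mem_cons_self : a ∈ a :: t)
    have ht : IsComposition t := fun x hx => h1 x (List.mem_cons_of_mem a hx)
    cases l₂ with
    | nil => simp at hsum; omega
    | cons b u =>
      have hb := h2 b (List.mem_cons_self : b ∈ b :: u)
      have hu : IsComposition u := fun x hx => h2 x (List.mem_cons_of_mem b hx)
      rw [Sset_cons, Sset_cons] at hS
      have hS' : ∀ k : ℕ, ((k = a ∧ t ≠ []) ∨ ∃ v ∈ Sset t, k = a + v) ↔
          ((k = b ∧ u ≠ []) ∨ ∃ v ∈ Sset u, k = b + v) := fun k => Set.ext_iff.mp hS k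
      simp only [List.sum_cons] at hsum
      by_cases hte : t = []
      · subst hte
        have hue : u = [] := by
          by_contra hue
          rcases (hS' b).mpr (Or.inl ⟨rfl, hue⟩) with ⟨-, h⟩ | ⟨v, hv, -⟩
          · exact h rfl
          · rw [Sset_nil] at hv; exact hv
        subst hue
        simp only [List.sum_nil, List.sum_cons, add_zero] at hsum
        simp [hsum]
      · have hue : u ≠ [] := by
          rintro rfl
          rcases (hS' a).mp (Or.inl ⟨rfl, hte⟩) with ⟨-, h⟩ | ⟨v, hv, -⟩
          · exact h rfl
          · rw [Sset_nil] at hv; exact hv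
        have hab : a = b := by
          rcases (hS' a).mp (Or.inl ⟨rfl, hte⟩) with ⟨h, -⟩ | ⟨v, hv, h⟩
          · exact h
          · rcases (hS' b).mpr (Or.inl ⟨rfl, hue⟩) with ⟨h', -⟩ | ⟨w, hw, h'⟩
            · exact h'.symm
            · have := Sset_pos hu hv
              have := Sset_pos ht hw
              omega
        subst hab
        have hSt : Sset t = Sset u := by
          ext v
          constructor
          · intro hv
            have hv1 := Sset_pos ht hv
            rcases (hS' (a + v)).mp (Or.inr ⟨v, hv, rfl⟩) with ⟨h, -⟩ | ⟨w, hw, h⟩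
            · omega
            · have : v = w := by omega
              rwa [this]
          · intro hv
            have hv1 := Sset_pos hu hv
            rcases (hS' (a + v)).mpr (Or.inr ⟨v, hv, rfl⟩) with ⟨h, -⟩ | ⟨w, hw, h⟩
            · omega
            · have : v = w := by omega
              rwa [this]
        rw [ih ht u hu (by omega) hSt]

lemma descent_insert (π : List ℕ) (hpos : ∀ x ∈ π, 0 < x) (i : ℕ) (hi : i ≤ π.length) :
    descentSet (π.take i ++ 0 :: π.drop i) = shiftIns (descentSet π) i := by
  set τ := π.take i ++ 0 :: π.drop i with hτ
  have hlt : (π.take i).length = i := by rw [List.length_take]; omega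
  have hlen : τ.length = π.length + 1 := by
    rw [hτ]; simp; omega
  have g1 : ∀ k < i, τ.getD k 0 = π.getD k 0 := by
    intro k hk
    rw [List.getD_eq_getElem?_getD, List.getD_eq_getElem?_getD, hτ,
      List.getElem?_append, hlt, if_pos hk, List.getElem?_take, if_pos hk]
  have g2 : τ.getD i 0 = 0 := by
    rw [List.getD_eq_getElem?_getD, hτ, List.getElem?_append_right (by omega), hlt]
    simp
  have g3 : ∀ k, i < k → τ.getD k 0 = π.getD (k - 1) 0 := by
    intro k hk
    rw [List.getD_eq_getElem?_getD, List.getD_eq_getElem?_getD, hτ,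
      List.getElem?_append_right (by omega), hlt]
    have e : k - i = (k - i - 1) + 1 := by omega
    rw [e]
    simp only [List.getElem?_cons_succ, List.getElem?_drop]
    rw [show i + (k - i - 1) = k - 1 from by omega]
  have gpos : ∀ k < π.length, 0 < π.getD k 0 := by
    intro k hk
    rw [List.getD_eq_getElem π 0 hk]
    exact hpos _ (List.getElem_mem hk)
  ext k
  simp only [descentSet, Set.mem_setOf_eq, shiftIns, hlen]
  rcases lt_trichotomy k i with hk | heq | hk
  · rw [g1 k hk, g1 (k - 1) (by omega)]
    constructor
    · rintro ⟨h1, h2, h3⟩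
      exact Or.inl ⟨hk, h1, by omega, h3⟩
    · rintro (⟨-, h1, h2, h3⟩ | ⟨he, -⟩ | ⟨hgt, -⟩)
      · exact ⟨h1, by omega, h3⟩
      · omega
      · omega
  · subst heq
    rcases Nat.eq_zero_or_pos k with hz | hi0
    · constructor
      · rintro ⟨h1, -, -⟩; omega
      · rintro (⟨h, -⟩ | ⟨-, h⟩ | ⟨h, -⟩) <;> omega
    · rw [g2, g1 (k - 1) (by omega)]
      constructor
      · intro _
        exact Or.inr (Or.inl ⟨rfl, hi0⟩)
      · intro _
        exact ⟨hi0, by omega, gpos (k - 1) (by omega)⟩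
  · rw [g3 k hk]
    by_cases hk1 : k = i + 1
    · rw [show k - 1 = i from by omega, g2]
      constructor
      · rintro ⟨-, -, h⟩; omega
      · rintro (⟨h, -⟩ | ⟨h, -⟩ | ⟨h, -⟩) <;> omega
    · rw [g3 (k - 1) (by omega)]
      constructor
      · rintro ⟨h1, h2, h3⟩
        exact Or.inr (Or.inr ⟨by omega, by omega, by omega, h3⟩)
      · rintro (⟨h, -⟩ | ⟨h, -⟩ | ⟨h1, h2, h3, h4⟩)
        · omega
        · omega
        · exact ⟨by omega, by omega, h4⟩

theorem stmt19 (n : ℕ) (α : List ℕ) (hα : IsComposition α) (hsum : α.sum = n)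
    (π : List ℕ) (hπ : π.Perm ((List.range n).map (· + 1)))
    (hdes : descentSet π = Sset α) :
    {β : List ℕ | IsComposition β ∧ β.sum = n + 1 ∧
        ∃ i, i ≤ n ∧ Sset β = descentSet (π.take i ++ 0 :: π.drop i)} =
      {β : List ℕ | coverSInf α β} := by
  have hlen : π.length = n := by
    have := hπ.length_eq
    simpa using this
  have hpos : ∀ x ∈ π, 0 < x := by
    intro x hx
    have := hπ.subset hx
    simp at this
    obtain ⟨y, -, rfl⟩ := this
    omega
  ext β
  simp only [Set.mem_setOf_eq]
  constructor
  · rintro ⟨hβc, hβs, i, hi, hS⟩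
    have hd : descentSet (π.take i ++ 0 :: π.drop i) = shiftIns (Sset α) i := by
      rw [descent_insert π hpos i (by omega), hdes]
    have hS2 : Sset β = Sset (fIns α i) := by
      rw [hS, hd, fIns_Sset α hα i (by omega)]
    have hβ : β = fIns α i :=
      Sset_inj β hβc (fIns α i) (fIns_comp α hα i)
        (by rw [hβs, fIns_sum α i (by omega), hsum]) hS2
    rw [hβ]
    exact fIns_cover α hα i (by omega)
  · intro hc
    obtain ⟨i, hi, rfl⟩ := cover_to_fIns α hα β hc
    refine ⟨fIns_comp α hα i, by rw [fIns_sum α i hi, hsum], i, by omega, ?_⟩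
    rw [descent_insert π hpos i (by omega), hdes, fIns_Sset α hα i hi]
end
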